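/- arXiv:1304.5144 — 12 statements merged into one kernel-verified Lean document; each statement's English description precedes it below -/
import Mathlib

section
/- Let G be a group, U and V subgroups of G, and W a subgroup of U ∩ V. Suppose θ: U → V is a group isomorphism such that θ(x) = x for all x ∈ W, and suppose that the centraliser C_G(W ∩ g⁻¹Wg) is trivial for all g ∈ U. Then U = V and θ is the identity map on U. -/
/-- Rigidity lemma (Lemma 3.2 / `bewlem`): if `θ : U ≃* V` fixes `W ≤ U ⊓ V` pointwise and
`C_G(W ∩ g⁻¹Wg) = 1` for all `g ∈ U`, then `U = V` and `θ` is the identity. -/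
theorem stmt_0 {G : Type*} [Group G] (U V W : Subgroup G) (hW : W ≤ U ⊓ V)
    (θ : U ≃* V)
    (hfix : ∀ (x : G) (hxW : x ∈ W) (hxU : x ∈ U), ((θ ⟨x, hxU⟩ : V) : G) = x)
    (hcent : ∀ g ∈ U,
      Subgroup.centralizer ((W ⊓ Subgroup.map (MulAut.conj g⁻¹).toMonoidHom W : Subgroup G) : Set G) = ⊥) :
    U = V ∧ ∀ x : U, ((θ x : V) : G) = (x : G) := by
  have key : ∀ g (hg : g ∈ U), ((θ ⟨g, hg⟩ : V) : G) = g := by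
    intro g hg
    set t : G := ((θ ⟨g, hg⟩ : V) : G) with ht
    have hmem : g⁻¹ * t ∈ Subgroup.centralizer
        ((W ⊓ Subgroup.map (MulAut.conj g⁻¹).toMonoidHom W : Subgroup G) : Set G) := by
      rw [Subgroup.mem_centralizer_iff]
      rintro w ⟨hwW, w', hw'W, rfl⟩
      set w : G := (MulAut.conj g⁻¹).toMonoidHom w' with hw
      have hweq : w = g⁻¹ * w' * g := by simp [hw]
      have hwU : w ∈ U := (hW hwW).1
      have hw'U : w' ∈ U := (hW hw'W).1
      have hsub : (⟨g, hg⟩ : U) * ⟨w, hwU⟩ * (⟨g, hg⟩ : U)⁻¹ = ⟨w', hw'U⟩ := by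
        ext; simp [hweq]; group
      have h1 : θ ⟨g, hg⟩ * θ ⟨w, hwU⟩ * (θ ⟨g, hg⟩)⁻¹ = θ ⟨w', hw'U⟩ := by
        rw [← map_inv, ← map_mul, ← map_mul, hsub]
      have h2 : t * w * t⁻¹ = w' := by
        have := congrArg (fun v : V => (v : G)) h1
        simpa [hfix w hwW hwU, hfix w' hw'W hw'U] using this
      have h3 : t * w = g * w * g⁻¹ * t := by
        rw [show g * w * g⁻¹ = w' by rw [hweq]; group, ← h2]; group
      calc w * (g⁻¹ * t) = g⁻¹ * (g * w * g⁻¹ * t) := by group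
        _ = g⁻¹ * (t * w) := by rw [h3]
        _ = g⁻¹ * t * w := by group
    rw [hcent g hg, Subgroup.mem_bot, inv_mul_eq_one] at hmem
    exact hmem.symm
  constructor
  · apply le_antisymm
    · intro u hu
      rw [← key u hu]
      exact (θ ⟨u, hu⟩).2
    · intro v hv
      have h := key (θ.symm ⟨v, hv⟩) (θ.symm ⟨v, hv⟩).2
      simp only [Subtype.coe_eta, MulEquiv.apply_symm_apply] at h
      rw [show v = ((θ.symm ⟨v, hv⟩ : U) : G) from h]
      exact (θ.symm ⟨v, hv⟩).2
  · intro x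
    exact key x x.2
end

section
/- Let G be a group in which every normal subgroup has trivial centre, and let A, B be normal subgroups of G. Then C_G(C_G(A ∩ B)) = C_G(C_G(A)) ∩ C_G(C_G(B)). -/
open Subgroup

/-- The centralizer of a normal subgroup is normal. -/
lemma centralizer_normal_aux {G : Type*} [Group G] {A : Subgroup G} (hA : A.Normal) :
    (Subgroup.centralizer (A : Set G)).Normal := by
  constructor
  intro n hn g
  rw [Subgroup.mem_centralizer_iff] at hn ⊢
  intro h hh
  have h1 : g⁻¹ * h * g ∈ A := by
    have := hA.conj_mem h hh g⁻¹
    simpa [mul_assoc] using this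
  have hc := hn _ h1
  calc h * (g * n * g⁻¹) = g * ((g⁻¹ * h * g) * n) * g⁻¹ := by group
    _ = g * (n * (g⁻¹ * h * g)) * g⁻¹ := by rw [hc]
    _ = g * n * g⁻¹ * h := by group

/-- Commutator of elements of two normal subgroups lies in their intersection. -/
lemma commutator_mem_inf_aux {G : Type*} [Group G] {M N : Subgroup G} (hM : M.Normal)
    (hN : N.Normal) {x y : G} (hx : x ∈ M) (hy : y ∈ N) : x⁻¹ * y⁻¹ * x * y ∈ M ⊓ N := by
  constructor
  · have h1 : y⁻¹ * x * y ∈ M := by simpa using hM.conj_mem x hx y⁻¹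
    have : x⁻¹ * y⁻¹ * x * y = x⁻¹ * (y⁻¹ * x * y) := by group
    rw [this]; exact M.mul_mem (M.inv_mem hx) h1
  · have h1 : x⁻¹ * y⁻¹ * x ∈ N := by simpa [mul_assoc] using hN.conj_mem y⁻¹ (N.inv_mem hy) x⁻¹
    exact N.mul_mem h1 hy

/-- If the commutator lands in the trivial subgroup for all pairs, subgroups centralize. -/
lemma le_centralizer_of_inf_eq_bot {G : Type*} [Group G] {M A : Subgroup G} (hM : M.Normal)
    (hA : A.Normal) (h : M ⊓ A = ⊥) : M ≤ Subgroup.centralizer (A : Set G) := by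
  intro x hx
  rw [Subgroup.mem_centralizer_iff]
  intro a ha
  have := commutator_mem_inf_aux hM hA hx ha
  rw [h, Subgroup.mem_bot] at this
  have : x⁻¹ * a⁻¹ * x * a = 1 := this
  have := congrArg (fun z => a * x * z) this
  simpa [mul_assoc] using this.symm

/-- If every normal subgroup of `G` has trivial centre, then for normal subgroups `A`, `B`:
`C²_G(A ∩ B) = C²_G(A) ∩ C²_G(B)`. -/
theorem stmt_2 {G : Type*} [Group G]
    (hG : ∀ N : Subgroup G, N.Normal → N ⊓ Subgroup.centralizer (N : Set G) = ⊥)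
    (A B : Subgroup G) (hA : A.Normal) (hB : B.Normal) :
    Subgroup.centralizer ((Subgroup.centralizer ((A ⊓ B : Subgroup G) : Set G)) : Set G) =
      Subgroup.centralizer ((Subgroup.centralizer (A : Set G)) : Set G) ⊓
        Subgroup.centralizer ((Subgroup.centralizer (B : Set G)) : Set G) := by
  have hAB : (A ⊓ B).Normal := @Subgroup.normal_inf_normal _ _ A B hA hB
  have hCA := centralizer_normal_aux hA
  have hCB := centralizer_normal_aux hB
  have hCAB := centralizer_normal_aux hAB
  have hC2A := centralizer_normal_aux hCA
  have hC2B := centralizer_normal_aux hCB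
  apply le_antisymm
  · exact le_inf
      (Subgroup.centralizer_le (Subgroup.centralizer_le (SetLike.coe_subset_coe.mpr inf_le_left)))
      (Subgroup.centralizer_le (Subgroup.centralizer_le (SetLike.coe_subset_coe.mpr inf_le_right)))
  · -- key: M := C²A ⊓ C²B ⊓ C(A⊓B) = ⊥
    set CA := Subgroup.centralizer (A : Set G)
    set CB := Subgroup.centralizer (B : Set G)
    set CAB := Subgroup.centralizer ((A ⊓ B : Subgroup G) : Set G)
    set M : Subgroup G := (Subgroup.centralizer (CA : Set G) ⊓
      Subgroup.centralizer (CB : Set G)) ⊓ CAB with hMdef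
    have hMnorm : M.Normal := @Subgroup.normal_inf_normal _ _ _ _ (@Subgroup.normal_inf_normal _ _ _ _ hC2A hC2B) hCAB
    have hMA : M ⊓ A = ⊥ := by
      -- P := M ⊓ A satisfies P ⊓ B ≤ (A⊓B) ⊓ C(A⊓B) = ⊥, so P ≤ C(B); then P ≤ C²B ⊓ CB = ⊥
      have hPnorm : (M ⊓ A).Normal := @Subgroup.normal_inf_normal _ _ _ _ hMnorm hA
      have hPB : (M ⊓ A) ⊓ B = ⊥ := by
        rw [← le_bot_iff, ← hG (A ⊓ B) hAB]
        refine le_inf ?_ ?_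
        · exact le_inf (le_trans (inf_le_left) (le_trans inf_le_right le_rfl) |>.trans le_rfl
            |>.trans le_rfl) inf_le_right |>.trans le_rfl
        · exact le_trans inf_le_left (le_trans inf_le_left inf_le_right)
      have hPCB : M ⊓ A ≤ CB := le_centralizer_of_inf_eq_bot hPnorm hB hPB
      rw [← le_bot_iff]
      calc M ⊓ A ≤ Subgroup.centralizer (CB : Set G) ⊓ CB :=
            le_inf (le_trans inf_le_left (le_trans inf_le_left inf_le_right)) hPCB
        _ ≤ ⊥ := by rw [inf_comm]; exact (hG CB hCB).le
    have hMCA : M ≤ CA := le_centralizer_of_inf_eq_bot hMnorm hA hMA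
    have hMbot : M = ⊥ := by
      rw [← le_bot_iff, ← hG CA hCA]
      exact le_inf hMCA (le_trans inf_le_left inf_le_left)
    intro x hx
    rw [Subgroup.mem_centralizer_iff]
    intro y hy
    have hc : x⁻¹ * y⁻¹ * x * y ∈ M := by
      refine ⟨⟨?_, ?_⟩, ?_⟩
      · have h1 : y⁻¹ * x * y ∈ Subgroup.centralizer (CA : Set G) := by
          simpa using hC2A.conj_mem x hx.1 y⁻¹
        have : x⁻¹ * y⁻¹ * x * y = x⁻¹ * (y⁻¹ * x * y) := by group
        rw [this]; exact Subgroup.mul_mem _ (Subgroup.inv_mem _ hx.1) h1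
      · have h1 : y⁻¹ * x * y ∈ Subgroup.centralizer (CB : Set G) := by
          simpa using hC2B.conj_mem x hx.2 y⁻¹
        have : x⁻¹ * y⁻¹ * x * y = x⁻¹ * (y⁻¹ * x * y) := by group
        rw [this]; exact Subgroup.mul_mem _ (Subgroup.inv_mem _ hx.2) h1
      · have h1 : x⁻¹ * y⁻¹ * x ∈ CAB := by
          simpa [mul_assoc] using hCAB.conj_mem y⁻¹ (Subgroup.inv_mem _ hy) x⁻¹
        exact Subgroup.mul_mem _ h1 hy
    rw [hMbot, Subgroup.mem_bot] at hc
    have := congrArg (fun z => y * x * z) hc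
    simpa [mul_assoc] using this.symm
end

section
/- Let G be a group with no non-trivial abelian normal subgroups, and let A, B be normal subgroups of G. Then C_A(B) = C_A(A ∩ B), where C_A(X) = A ∩ C_G(X). -/
/-- If every normal subgroup of `G` has trivial centre, then for normal subgroups `A`, `B`:
`C_A(B) = C_A(A ∩ B)`, where `C_A(X) = A ⊓ C_G(X)`. -/
theorem stmt_3 {G : Type*} [Group G]
    (hG : ∀ N : Subgroup G, N.Normal → N ⊓ Subgroup.centralizer (N : Set G) = ⊥)
    (A B : Subgroup G) (hA : A.Normal) (hB : B.Normal) :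
    A ⊓ Subgroup.centralizer (B : Set G) =
      A ⊓ Subgroup.centralizer ((A ⊓ B : Subgroup G) : Set G) := by
  set N : Subgroup G := A ⊓ B with hN
  have hNnorm : N.Normal := ⟨fun n hn g => ⟨hA.conj_mem n hn.1 g, hB.conj_mem n hn.2 g⟩⟩
  -- the centralizer of N is normal
  have hCnorm : (Subgroup.centralizer (N : Set G)).Normal := by
    constructor
    intro c hc g
    rw [Subgroup.mem_centralizer_iff] at hc ⊢
    intro n hn
    have hn' : g⁻¹ * n * g ∈ N := by
      have := hNnorm.conj_mem n hn g⁻¹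
      simpa using this
    have := hc _ hn'
    calc n * (g * c * g⁻¹) = g * ((g⁻¹ * n * g) * c) * g⁻¹ := by group
      _ = g * (c * (g⁻¹ * n * g)) * g⁻¹ := by rw [this]
      _ = g * c * g⁻¹ * n := by group
  have hCAnorm : (A ⊓ Subgroup.centralizer (N : Set G)).Normal :=
    ⟨fun c hc g => ⟨hA.conj_mem c hc.1 g, hCnorm.conj_mem c hc.2 g⟩⟩
  apply le_antisymm
  · exact inf_le_inf_left _ (Subgroup.centralizer_le (by exact_mod_cast inf_le_right))
  · rintro x ⟨hxA, hxC⟩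
    refine ⟨hxA, ?_⟩
    show x ∈ Subgroup.centralizer (B : Set G)
    rw [Subgroup.mem_centralizer_iff]
    intro b hb
    -- commutator k = x⁻¹ * b⁻¹ * x * b
    set k : G := x⁻¹ * (b⁻¹ * x * b) with hk
    have hkA : k ∈ A := A.mul_mem (A.inv_mem hxA) (by
      have := hA.conj_mem x hxA b⁻¹
      simpa using this)
    have hkB : k ∈ B := by
      have h1 : x⁻¹ * b⁻¹ * x ∈ B := by
        have := hB.conj_mem b⁻¹ (B.inv_mem hb) x⁻¹
        simpa using this
      have := B.mul_mem h1 hb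
      simpa [hk, mul_assoc] using this
    have hkC : k ∈ Subgroup.centralizer (N : Set G) := by
      have h1 : x⁻¹ ∈ Subgroup.centralizer (N : Set G) :=
        (Subgroup.centralizer (N : Set G)).inv_mem hxC
      have h2 : b⁻¹ * x * b ∈ Subgroup.centralizer (N : Set G) := by
        have := hCnorm.conj_mem x hxC b⁻¹
        simpa using this
      exact (Subgroup.centralizer (N : Set G)).mul_mem h1 h2
    have : k ∈ N ⊓ Subgroup.centralizer (N : Set G) := ⟨⟨hkA, hkB⟩, hkC⟩
    rw [hG N hNnorm, Subgroup.mem_bot] at this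
    have hx : b⁻¹ * x * b = x := by
      have : x * (x⁻¹ * (b⁻¹ * x * b)) = x * 1 := by rw [← hk, this]
      simpa [mul_assoc] using this
    have h2 := congrArg (fun g => b * g) hx
    simpa [mul_assoc] using h2.symm
end

section
/- Let G be a group with trivial centre, let K be a direct factor of G (i.e. G = K × C_G(K) internally), and let H be a subgroup of G such that H = C_G(C_G(H)). Then H is the internal direct product of H ∩ K and C_H(K). -/
/-- If `Z(G) = 1`, `G = K × L` is an internal direct product (with `L = C_G(K)`), and
`H ≤ G` satisfies `H = C²_G(H)`, then `H` is the internal direct product of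
`H ∩ K` and `C_H(K) = H ∩ C_G(K)`. -/
theorem stmt_5 {G : Type*} [Group G] (hZ : Subgroup.center G = ⊥)
    (K L H : Subgroup G) (hKn : K.Normal) (hLn : L.Normal)
    (hKL : K ⊓ L = ⊥) (hKLsup : K ⊔ L = ⊤)
    (hH : H = Subgroup.centralizer ((Subgroup.centralizer (H : Set G)) : Set G)) :
    (H ⊓ K) ⊓ (H ⊓ Subgroup.centralizer (K : Set G)) = ⊥ ∧
      (H ⊓ K) ⊔ (H ⊓ Subgroup.centralizer (K : Set G)) = H := by
  haveI := hLn
  -- elements of K and L commute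
  have hcomm : ∀ x y : G, x ∈ K → y ∈ L → Commute x y :=
    Subgroup.commute_of_normal_of_disjoint K L hKn hLn (disjoint_iff.mpr hKL)
  -- every element of G decomposes as k * l
  have hdecomp : ∀ g : G, ∃ k ∈ K, ∃ l ∈ L, g = k * l := by
    intro g
    have hg : g ∈ K ⊔ L := hKLsup ▸ Subgroup.mem_top g
    rw [← SetLike.mem_coe, Subgroup.mul_normal K L] at hg
    obtain ⟨k, hk, l, hl, h⟩ := hg
    exact ⟨k, hk, l, hl, h.symm⟩
  -- uniqueness of decomposition
  have huniq : ∀ k₁ k₂ l₁ l₂ : G, k₁ ∈ K → k₂ ∈ K → l₁ ∈ L → l₂ ∈ L →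
      k₁ * l₁ = k₂ * l₂ → k₁ = k₂ ∧ l₁ = l₂ := by
    intro k₁ k₂ l₁ l₂ hk₁ hk₂ hl₁ hl₂ h
    have hm : k₂⁻¹ * k₁ ∈ K ⊓ L := by
      constructor
      · exact K.mul_mem (K.inv_mem hk₂) hk₁
      · have : k₂⁻¹ * k₁ = l₂ * l₁⁻¹ := by
          rw [inv_mul_eq_iff_eq_mul, ← mul_assoc, ← h]; group
        rw [this]; exact L.mul_mem hl₂ (L.inv_mem hl₁)
    rw [hKL, Subgroup.mem_bot, inv_mul_eq_one] at hm
    refine ⟨hm.symm, ?_⟩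
    have := h
    rw [← hm] at this
    exact mul_left_cancel this
  constructor
  · -- the intersection is trivial
    rw [eq_bot_iff]
    intro x hx
    obtain ⟨⟨-, hxK⟩, -, hxC⟩ := hx
    have hxZ : x ∈ Subgroup.center G := by
      rw [Subgroup.mem_center_iff]
      intro g
      obtain ⟨k, hk, l, hl, rfl⟩ := hdecomp g
      have h1 : k * x = x * k := Subgroup.mem_centralizer_iff.mp hxC k hk
      have h2 : x * l = l * x := hcomm x l hxK hl
      calc k * l * x = k * (l * x) := by rw [mul_assoc]
        _ = k * (x * l) := by rw [h2]
        _ = (k * x) * l := by rw [mul_assoc]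
        _ = x * (k * l) := by rw [h1, mul_assoc]
    rw [hZ] at hxZ
    exact hxZ
  · -- the sup is H
    refine le_antisymm (sup_le inf_le_left inf_le_left) ?_
    intro h hh
    obtain ⟨k, hk, l, hl, rfl⟩ := hdecomp h
    have hkH : k ∈ H := by
      rw [hH, Subgroup.mem_centralizer_iff]
      intro m hm
      have hmh : (k * l) * m = m * (k * l) :=
        Subgroup.mem_centralizer_iff.mp hm (k * l) hh
      have h1 : m⁻¹ * k * m ∈ K := by
        have := hKn.conj_mem k hk m⁻¹
        simpa [mul_assoc] using this
      have h2 : m⁻¹ * l * m ∈ L := by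
        have := hLn.conj_mem l hl m⁻¹
        simpa [mul_assoc] using this
      have hprod : (m⁻¹ * k * m) * (m⁻¹ * l * m) = k * l := by
        have : (m⁻¹ * k * m) * (m⁻¹ * l * m) = m⁻¹ * ((k * l) * m) := by group
        rw [this, hmh, ← mul_assoc, inv_mul_cancel, one_mul]
      obtain ⟨hkeq, -⟩ := huniq (m⁻¹ * k * m) k (m⁻¹ * l * m) l h1 hk h2 hl hprod
      conv_lhs => rw [← hkeq]
      simp [mul_assoc]
    have hlH : l ∈ H := by
      have : k⁻¹ * (k * l) ∈ H := H.mul_mem (H.inv_mem hkH) hh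
      simpa [← mul_assoc] using this
    have hlC : l ∈ Subgroup.centralizer (K : Set G) :=
      Subgroup.mem_centralizer_iff.mpr fun x hx => hcomm x l hx hl
    exact Subgroup.mul_mem _ (Subgroup.mem_sup_left ⟨hkH, hk⟩)
      (Subgroup.mem_sup_right ⟨hlH, hlC⟩)
end

section
/- Dietzmann's Lemma: let G be a group and Σ a finite subset of G consisting of torsion elements such that Σ is invariant under conjugation by every element of G. Then the subgroup generated by Σ is finite. -/
/-- Extraction lemma: if `s` occurs in a word over a conjugation-invariant set `S`,
we can pull one copy of `s` to the front, keeping the remaining occurrences of `s`. -/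
theorem dietzmann_extract {G : Type*} [Group G] [DecidableEq G] (S : Set G)
    (hconj : ∀ g : G, ∀ s ∈ S, g * s * g⁻¹ ∈ S) (s : G) :
    ∀ l : List G, (∀ y ∈ l, y ∈ S) → 1 ≤ l.count s →
      ∃ l' : List G, (∀ y ∈ l', y ∈ S) ∧ l'.length + 1 = l.length ∧
        l'.count s + 1 = l.count s ∧ s * l'.prod = l.prod := by
  intro l
  induction l with
  | nil => intro _ h; simp at h
  | cons a t ih =>
    intro hmem hcount
    by_cases ha : a = s
    · subst ha
      exact ⟨t, fun y hy => hmem y (by simp [hy]), by simp, by simp, by simp⟩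
    · have hct : 1 ≤ t.count s := by
        rwa [List.count_cons_of_ne (by simpa [eq_comm] using ha)] at hcount
      obtain ⟨t', ht'mem, ht'len, ht'count, ht'prod⟩ :=
        ih (fun y hy => hmem y (by simp [hy])) hct
      refine ⟨(s⁻¹ * a * s) :: t', ?_, ?_, ?_, ?_⟩
      · intro y hy
        rcases List.mem_cons.mp hy with rfl | hy
        · simpa using hconj s⁻¹ a (hmem a (by simp))
        · exact ht'mem y hy
      · simp [← ht'len]
      · have hne : s ≠ s⁻¹ * a * s := by
          intro h
          apply ha
          have := congrArg (fun x => s * x * s⁻¹) h.symm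
          simpa [mul_assoc] using this
        rw [List.count_cons_of_ne hne.symm, List.count_cons_of_ne ha]
        exact ht'count
      · simp only [List.prod_cons, ← ht'prod]
        group

/-- Extract `k` copies of `s` from a word over `S`. -/
theorem dietzmann_extract_pow {G : Type*} [Group G] [DecidableEq G] (S : Set G)
    (hconj : ∀ g : G, ∀ s ∈ S, g * s * g⁻¹ ∈ S) (s : G) (k : ℕ) :
    ∀ l : List G, (∀ y ∈ l, y ∈ S) → k ≤ l.count s →
      ∃ l' : List G, (∀ y ∈ l', y ∈ S) ∧ l'.length + k = l.length ∧
        s ^ k * l'.prod = l.prod := by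
  induction k with
  | zero => intro l hl _; exact ⟨l, hl, by simp, by simp⟩
  | succ n ih =>
    intro l hl hc
    obtain ⟨l₁, hl₁mem, hl₁len, hl₁count, hl₁prod⟩ :=
      dietzmann_extract S hconj s l hl (le_trans (Nat.le_add_left 1 n) hc)
    obtain ⟨l₂, hl₂mem, hl₂len, hl₂prod⟩ := ih l₁ hl₁mem (by omega)
    refine ⟨l₂, hl₂mem, by omega, ?_⟩
    rw [pow_succ', mul_assoc, hl₂prod, hl₁prod]

/-- Dietzmann's Lemma: a finite, conjugation-invariant set of torsion elements generates a
finite subgroup. -/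
theorem stmt_7 {G : Type*} [Group G] (S : Set G) (hfin : S.Finite)
    (htor : ∀ s ∈ S, IsOfFinOrder s)
    (hconj : ∀ g : G, ∀ s ∈ S, g * s * g⁻¹ ∈ S) :
    ((Subgroup.closure S : Subgroup G) : Set G).Finite := by
  classical
  set F : Finset G := hfin.toFinset with hF
  -- common exponent
  set m : ℕ := F.lcm orderOf with hm
  have hmpos : 0 < m := by
    apply Nat.pos_of_ne_zero
    intro h0
    rw [hm] at h0
    rw [Finset.lcm_eq_zero_iff] at h0
    obtain ⟨x, hx, hx0⟩ := h0
    have : IsOfFinOrder x := htor x (by simpa [hF] using hx)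
    exact (orderOf_pos_iff.mpr this).ne' hx0
  have hpowm : ∀ s ∈ S, s ^ m = 1 := by
    intro s hs
    exact orderOf_dvd_iff_pow_eq_one.mp (Finset.dvd_lcm (by simpa [hF] using hs))
  set K : ℕ := F.card * m with hK
  -- every word over S can be shortened to length ≤ K
  have key : ∀ n : ℕ, ∀ l : List G, l.length ≤ n → (∀ y ∈ l, y ∈ S) →
      ∃ l' : List G, (∀ y ∈ l', y ∈ S) ∧ l'.length ≤ K ∧ l'.prod = l.prod := by
    intro n
    induction n with
    | zero =>
      intro l hl hmem
      exact ⟨l, hmem, le_trans hl (Nat.zero_le _), rfl⟩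
    | succ n ih =>
      intro l hl hmem
      by_cases hlen : l.length ≤ K
      · exact ⟨l, hmem, hlen, rfl⟩
      · push_neg at hlen
        -- pigeonhole: some s ∈ S occurs at least m times
        have hsub : l.toFinset ⊆ F := by
          intro x hx
          simp only [hF, Set.Finite.mem_toFinset]
          exact hmem x (by simpa using hx)
        have hsum : (l.toFinset.sum fun a => l.count a) = l.length :=
          List.sum_toFinset_count_eq_length l
        have : ∃ s ∈ S, m ≤ l.count s := by
          by_contra h
          push_neg at h
          have hbound : l.length ≤ F.card * (m - 1) := by
            calc l.length = l.toFinset.sum fun a => l.count a := hsum.symm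
              _ ≤ F.sum fun a => l.count a :=
                  Finset.sum_le_sum_of_subset hsub
              _ ≤ F.sum fun _ => (m - 1) := by
                  apply Finset.sum_le_sum
                  intro i hi
                  have := h i (by simpa [hF] using hi)
                  omega
              _ = F.card * (m - 1) := by simp [Finset.sum_const, mul_comm]
          have : F.card * (m - 1) ≤ F.card * m := Nat.mul_le_mul_left _ (by omega)
          omega
        obtain ⟨s, hs, hcs⟩ := this
        obtain ⟨l₁, hl₁mem, hl₁len, hl₁prod⟩ :=
          dietzmann_extract_pow S hconj s m l hmem hcs
        have hl₁ : l₁.length ≤ n := by omega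
        obtain ⟨l', hl'mem, hl'len, hl'prod⟩ := ih l₁ hl₁ hl₁mem
        refine ⟨l', hl'mem, hl'len, ?_⟩
        rw [hl'prod, ← hl₁prod, hpowm s hs, one_mul]
  -- the finite candidate set
  haveI : Finite S := hfin.to_subtype
  have hTfin : ((fun l : List S => (l.map (Subtype.val)).prod) ''
      {l : List S | l.length ≤ K}).Finite :=
    (List.finite_length_le S K).image _
  apply hTfin.subset
  intro x hx
  -- inverses of elements of S lie in the monoid closure of S
  have hsubinv : S ∪ S⁻¹ ⊆ (Submonoid.closure S : Set G) := by
    rintro y (hy | hy)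
    · exact Submonoid.subset_closure hy
    · have hy' : y⁻¹ ∈ S := hy
      have ho := htor _ hy'
      have h1 : 1 ≤ orderOf y⁻¹ := ho.orderOf_pos
      have hmul : y⁻¹ ^ (orderOf y⁻¹ - 1) * y⁻¹ = 1 := by
        rw [← pow_succ, Nat.sub_add_cancel h1, pow_orderOf_eq_one]
      have hyeq : y⁻¹ ^ (orderOf y⁻¹ - 1) = y := by
        rw [eq_inv_of_mul_eq_one_left hmul, inv_inv]
      rw [← hyeq]
      exact pow_mem (Submonoid.subset_closure hy') _
  have hx' : x ∈ Submonoid.closure S := by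
    have hx2 : x ∈ (Subgroup.closure S).toSubmonoid := hx
    rw [Subgroup.closure_toSubmonoid] at hx2
    exact (Submonoid.closure_le.mpr hsubinv) hx2
  obtain ⟨l, hlmem, hlprod⟩ := Submonoid.exists_list_of_mem_closure hx'
  obtain ⟨l', hl'mem, hl'len, hl'prod⟩ := key l.length l le_rfl hlmem
  refine ⟨l'.attach.map fun y => ⟨y.1, hl'mem y.1 y.2⟩, by simpa using hl'len, ?_⟩
  have hattach : ((l'.attach.map fun y => (⟨y.1, hl'mem y.1 y.2⟩ : S)).map Subtype.val) = l' := by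
    simp
  simp only [hattach]
  rw [hl'prod, hlprod]
end

section
/- Let M be a meet-semilattice with least element 0, and let ⊥: M → M be an order-reversing involution such that for all α, β ∈ M, α ∧ β = 0 if and only if β ≤ α⊥. Then M is a Boolean algebra with minimum 0, maximum 0⊥, complementation given by ⊥, and join given by α ∨ β = (α⊥ ∧ β⊥)⊥. In particular M is distributive: (α ∨ δ) ∧ β = (α ∧ β) ∨ (δ ∧ β) for all α, β, δ ∈ M. -/
section Aux
variable {M : Type*} [SemilatticeInf M] [OrderBot M] (c : M → M)
    (hinv : ∀ α : M, c (c α) = α)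
    (hanti : ∀ α β : M, α ≤ β → c β ≤ c α)
    (hdisj : ∀ α β : M, α ⊓ β = ⊥ ↔ β ≤ c α)

private theorem aux_self (hd : ∀ α β : M, α ⊓ β = ⊥ ↔ β ≤ c α) (α : M) : α ⊓ c α = ⊥ :=
  (hd α (c α)).2 le_rfl

private def auxLattice : Lattice M :=
  { (inferInstance : SemilatticeInf M) with
    sup := fun a b => c (c a ⊓ c b)
    le_sup_left := fun a b => by
      have := hanti _ _ (inf_le_left (a := c a) (b := c b))
      rwa [hinv] at this
    le_sup_right := fun a b => by
      have := hanti _ _ (inf_le_right (a := c a) (b := c b))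
      rwa [hinv] at this
    sup_le := fun a b x ha hb => by
      have : c x ≤ c a ⊓ c b := le_inf (hanti _ _ ha) (hanti _ _ hb)
      have := hanti _ _ this
      rwa [hinv] at this }

private def auxDistrib : DistribLattice M :=
  letI L := auxLattice c hinv hanti
  DistribLattice.ofInfSupLe (by
    intro β α δ
    -- goal : β ⊓ (α ⊔ δ) ≤ β ⊓ α ⊔ β ⊓ δ
    set γ := (β ⊓ α) ⊔ (β ⊓ δ) with hγ
    have key : ∀ x : M, β ⊓ x ≤ γ → x ≤ c (c γ ⊓ β) := by
      intro x hx
      have h1 : c γ ≤ c (β ⊓ x) := hanti _ _ hx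
      have h2 : (c γ ⊓ β) ⊓ x = ⊥ := by
        apply le_antisymm _ bot_le
        calc c γ ⊓ β ⊓ x ≤ c (β ⊓ x) ⊓ (β ⊓ x) := by
              refine le_inf (le_trans inf_le_left (le_trans inf_le_left h1)) ?_
              exact le_inf (le_trans inf_le_left inf_le_right) inf_le_right
          _ = ⊥ := by
              rw [inf_comm]; exact aux_self c hdisj (β ⊓ x)
      exact (hdisj _ _).1 h2
    have hα : α ≤ c (c γ ⊓ β) := key α (le_sup_left (a := β ⊓ α))
    have hδ : δ ≤ c (c γ ⊓ β) := key δ (le_sup_right (b := β ⊓ δ))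
    have hsup : α ⊔ δ ≤ c (c γ ⊓ β) := sup_le hα hδ
    have h3 : (c γ ⊓ β) ⊓ (α ⊔ δ) = ⊥ := (hdisj _ _).2 hsup
    have h4 : c γ ⊓ (β ⊓ (α ⊔ δ)) = ⊥ := by rw [← inf_assoc]; exact h3
    have := (hdisj _ _).1 h4
    rwa [hinv] at this)

end Aux

/-- A meet-semilattice with least element `0` equipped with an order-reversing involution `c`
such that `α ⊓ β = 0 ↔ β ≤ c α` is a Boolean algebra, with minimum `⊥`, maximum `c ⊥`,
complementation `c`, and join `α ⊔ β = c (c α ⊓ c β)`. -/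
theorem stmt_8 {M : Type*} [SemilatticeInf M] [OrderBot M] (c : M → M)
    (hinv : ∀ α : M, c (c α) = α)
    (hanti : ∀ α β : M, α ≤ β → c β ≤ c α)
    (hdisj : ∀ α β : M, α ⊓ β = ⊥ ↔ β ≤ c α) :
    ∃ B : BooleanAlgebra M,
      (∀ α β : M, B.le α β ↔ α ≤ β) ∧
      (∀ α β : M, B.inf α β = α ⊓ β) ∧
      B.bot = ⊥ ∧
      B.top = c ⊥ ∧
      B.compl = c ∧
      (∀ α β : M, B.sup α β = c (c α ⊓ c β)) := by
  letI D := auxDistrib c hinv hanti hdisj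
  have htop : ∀ a : M, a ≤ c ⊥ := fun a => by
    have : (⊥ : M) ⊓ a = ⊥ := by simp
    exact (hdisj _ _).1 this
  refine ⟨{ D with
    compl := c
    top := c ⊥
    bot := ⊥
    le_top := htop
    bot_le := fun a => (bot_le : (⊥ : M) ≤ a)
    inf_compl_le_bot := fun a => le_of_eq (aux_self c hdisj a)
    top_le_sup_compl := fun a => by
      apply hanti
      show c a ⊓ c (c a) ≤ ⊥
      exact le_of_eq (aux_self c hdisj (c a)) }, ?_, ?_, rfl, rfl, rfl, ?_⟩
  · intro α β; rfl
  · intro α β; rfl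
  · intro α β; rfl
end

section
/- In a lattice with an order-reversing involution ⊥ satisfying the disjointness condition (α ∧ β = 0 iff β ≤ α⊥), the implication α ∧ β ≤ γ ⟺ α ≤ β⊥ ∨ γ holds for all α, β, γ, where ∨ is defined by α ∨ β = (α⊥ ∧ β⊥)⊥. -/
/-- In a meet-semilattice with `0` and an order-reversing involution `c` with
`α ⊓ β = 0 ↔ β ≤ c α`, defining the join by De Morgan duality `α ∨ β = c (c α ⊓ c β)`,
one has `α ⊓ β ≤ γ ↔ α ≤ (c β) ∨ γ`. -/
theorem stmt_9 {M : Type*} [SemilatticeInf M] [OrderBot M] (c : M → M)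
    (hinv : ∀ α : M, c (c α) = α)
    (hanti : ∀ α β : M, α ≤ β → c β ≤ c α)
    (hdisj : ∀ α β : M, α ⊓ β = ⊥ ↔ β ≤ c α) :
    ∀ α β γ : M, α ⊓ β ≤ γ ↔ α ≤ c (c (c β) ⊓ c γ) := by
  have hle : ∀ x y : M, x ≤ y ↔ x ⊓ c y = ⊥ := by
    intro x y
    rw [hdisj]
    constructor
    · exact hanti x y
    · intro h
      have h2 := hanti _ _ h
      rwa [hinv, hinv] at h2
  intro α β γ
  rw [hinv]
  constructor
  · intro h
    refine (hdisj (β ⊓ c γ) α).mp ?_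
    have h1 : (β ⊓ c γ) ⊓ α ≤ γ ⊓ c γ := by
      refine le_inf (le_trans (le_inf inf_le_right (le_trans inf_le_left inf_le_left)) h)
        (le_trans inf_le_left inf_le_right)
    have h2 : γ ⊓ c γ = ⊥ := (hdisj γ (c γ)).mpr le_rfl
    exact le_bot_iff.mp (h2 ▸ h1)
  · intro h
    have h1 : β ⊓ c γ ≤ c α := by
      have := hanti _ _ h
      rwa [hinv] at this
    have h2 : α ⊓ (β ⊓ c γ) = ⊥ := (hdisj α _).mpr h1
    rw [hle]
    rw [← inf_assoc] at h2
    exact h2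
end

section
/- Let G be a locally compact group and H a discrete subgroup of G whose normaliser N_G(H) is open. Then H ≤ QZ(G). In particular, every discrete normal subgroup of a locally compact group is contained in the quasi-centre. -/
/-- A discrete subgroup of a locally compact group whose normaliser is open is contained in the
quasi-centre: each of its elements has open centraliser. -/
theorem stmt_13 {G : Type*} [Group G] [TopologicalSpace G] [IsTopologicalGroup G]
    [LocallyCompactSpace G]
    (H : Subgroup G) [DiscreteTopology H] (hN : IsOpen (Subgroup.normalizer (H : Set G) : Set G)) :
    ∀ h ∈ H, IsOpen ((Subgroup.centralizer ({h} : Set G) : Subgroup G) : Set G) := by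
  intro h hh
  obtain ⟨U, hU, hUh⟩ : ∃ U : Set G, IsOpen U ∧ Subtype.val ⁻¹' U = {(⟨h, hh⟩ : H)} := by
    have : IsOpen ({(⟨h, hh⟩ : H)} : Set H) := isOpen_discrete _
    rwa [isOpen_induced_iff] at this
  have hhU : h ∈ U := by
    have : (⟨h, hh⟩ : H) ∈ Subtype.val ⁻¹' U := by rw [hUh]; rfl
    exact this
  have cont : Continuous fun g : G => g * h * g⁻¹ := by continuity
  have hW : IsOpen ((Subgroup.normalizer (H : Set G) : Set G) ∩ (fun g : G => g * h * g⁻¹) ⁻¹' U) :=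
    hN.inter (hU.preimage cont)
  apply Subgroup.isOpen_of_mem_nhds
  apply Filter.mem_of_superset (hW.mem_nhds ⟨(Subgroup.normalizer (H : Set G)).one_mem, by simpa using hhU⟩)
  rintro g ⟨hg1, hg2⟩
  have hgH : g * h * g⁻¹ ∈ H := by
    have := (Subgroup.mem_normalizer_iff.mp hg1 h).mp hh
    simpa [mul_assoc] using this
  have : (⟨g * h * g⁻¹, hgH⟩ : H) ∈ Subtype.val ⁻¹' U := hg2
  rw [hUh] at this
  have heq : g * h * g⁻¹ = h := congrArg Subtype.val this
  rw [SetLike.mem_coe, Subgroup.mem_centralizer_singleton_iff]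
  calc g * h = (g * h * g⁻¹) * g := by group
    _ = h * g := by rw [heq]
end

section
/- Let U be a first-countable profinite group and K a closed subgroup of U. Then U commensurates K (i.e. for every u ∈ U, the subgroup uKu⁻¹ ∩ K has finite index in both K and uKu⁻¹) if and only if U normalises some open subgroup of K. -/
section Aux

variable {U : Type*} [Group U]

/-- Conjugation by `u` as a monoid hom. -/
private abbrev cj (u : U) : U →* U := (MulAut.conj u).toMonoidHom

private lemma mem_mapConj {H : Subgroup U} {u x : U} :
    x ∈ H.map (cj u) ↔ u⁻¹ * x * u ∈ H := by
  rw [show cj u = ((MulAut.conj u : U ≃* U)).toMonoidHom from rfl, Subgroup.mem_map_equiv,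
    MulAut.conj_symm_apply]

private lemma mapConj_mul (a b : U) (H : Subgroup U) :
    H.map (cj (a * b)) = (H.map (cj b)).map (cj a) := by
  rw [Subgroup.map_map]
  congr 1
  ext x
  simp [mul_assoc]

private lemma mapConj_one (H : Subgroup U) : H.map (cj (1 : U)) = H := by
  ext x
  rw [mem_mapConj]
  simp

variable [TopologicalSpace U] [IsTopologicalGroup U]

private lemma coe_mapConj (H : Subgroup U) (u : U) :
    (H.map (cj u) : Set U) = (fun x : U => u⁻¹ * x * u) ⁻¹' (H : Set U) := by
  ext x
  simpa using mem_mapConj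

private lemma isClosed_mapConj {H : Subgroup U} (h : IsClosed (H : Set U)) (u : U) :
    IsClosed (H.map (cj u) : Set U) := by
  rw [coe_mapConj]
  exact h.preimage (by fun_prop)

private lemma isOpen_mapConj {H : Subgroup U} (h : IsOpen (H : Set U)) (u : U) :
    IsOpen (H.map (cj u) : Set U) := by
  rw [coe_mapConj]
  exact h.preimage (by fun_prop)

/-- A closed subgroup of finite relative index in `K` is open in `K`. -/
private lemma isOpen_subgroupOf_of_relIndex (K H : Subgroup U) (hcl : IsClosed (H : Set U))
    (hrel : H.relIndex K ≠ 0) : IsOpen ((H.subgroupOf K : Subgroup K) : Set K) := by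
  haveI : (H.subgroupOf K).FiniteIndex := ⟨hrel⟩
  apply Subgroup.isOpen_of_isClosed_of_finiteIndex
  have : ((H.subgroupOf K : Subgroup K) : Set K) = Subtype.val ⁻¹' (H : Set U) := by
    ext x
    simp [Subgroup.mem_subgroupOf]
  rw [this]
  exact hcl.preimage continuous_subtype_val

variable [CompactSpace U] [TotallyDisconnectedSpace U] [T2Space U]

/-- Key openness lemma: if `uKu⁻¹ ∩ K` has finite relative index in `K`, then for any open
subgroup `V`, the conjugate `u (K ⊓ V) u⁻¹` meets `K` in an open subgroup of `K`. -/
private lemma keyOpen (K : Subgroup U) (hK : IsClosed (K : Set U)) (V : OpenSubgroup U)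
    {u : U} (hu : ((K.map (cj u)) ⊓ K).relIndex K ≠ 0) :
    IsOpen ((((K ⊓ V.toSubgroup).map (cj u)).subgroupOf K : Subgroup K) : Set K) := by
  have heq : (K ⊓ V.toSubgroup).map (cj u)
      = K.map (cj u) ⊓ (V.toSubgroup).map (cj u) :=
    Subgroup.map_inf _ _ _ (MulAut.conj u).injective
  have hVopen : IsOpen ((V.toSubgroup.map (cj u) : Subgroup U) : Set U) :=
    isOpen_mapConj V.isOpen u
  apply isOpen_subgroupOf_of_relIndex
  · rw [heq, Subgroup.coe_inf]
    exact (isClosed_mapConj hK u).inter (Subgroup.isClosed_of_isOpen _ hVopen)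
  · rw [heq]
    apply Subgroup.relIndex_inf_ne_zero
    · rw [← Subgroup.inf_relIndex_right]
      exact hu
    · haveI : Finite (U ⧸ (V.toSubgroup.map (cj u))) :=
        Subgroup.quotient_finite_of_isOpen _ hVopen
      haveI : (V.toSubgroup.map (cj u)).FiniteIndex :=
        Subgroup.finiteIndex_of_finite_quotient
      exact Subgroup.FiniteIndex.index_ne_zero
        (H := (V.toSubgroup.map (cj u)).subgroupOf K)

/-- In a first-countable profinite group, there is a countable family of open subgroups
forming a neighbourhood basis of `1`. -/
private lemma exists_countable_basis [FirstCountableTopology U] :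
    ∃ V : ℕ → OpenSubgroup U, ∀ O : Set U, IsOpen O → (1 : U) ∈ O →
      ∃ n, (V n : Set U) ⊆ O := by
  obtain ⟨B, hB⟩ := (nhds (1 : U)).exists_antitone_basis
  have h1 : ∀ n, ∃ Vn : OpenSubgroup U, (Vn : Set U) ⊆ B n := by
    intro n
    have hmem : B n ∈ nhds (1 : U) := hB.toHasBasis.mem_of_mem trivial
    obtain ⟨C, hC, h1C, hCB⟩ := isTopologicalBasis_isClopen.mem_nhds_iff.mp hmem
    obtain ⟨Vn, hVn⟩ := IsTopologicalGroup.exist_openSubgroup_sub_clopen_nhds_of_one hC h1C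
    exact ⟨Vn, hVn.trans hCB⟩
  choose V hV using h1
  refine ⟨V, fun O hO h1O => ?_⟩
  obtain ⟨n, -, hn⟩ := hB.toHasBasis.mem_iff.mp (hO.mem_nhds h1O)
  exact ⟨n, (hV n).trans hn⟩

end Aux

/-- A closed subgroup `K` of a first-countable profinite group `U` is commensurated by `U`
(every conjugate `uKu⁻¹` is commensurate with `K`) if and only if `U` normalises an open
subgroup of `K`. -/
theorem stmt_15 {U : Type*} [Group U] [TopologicalSpace U] [IsTopologicalGroup U]
    [CompactSpace U] [TotallyDisconnectedSpace U] [T2Space U]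
    [FirstCountableTopology U]
    (K : Subgroup U) (hK : IsClosed (K : Set U)) :
    (∀ u : U,
        (Subgroup.map (MulAut.conj u).toMonoidHom K ⊓ K).relIndex K ≠ 0 ∧
        (Subgroup.map (MulAut.conj u).toMonoidHom K ⊓ K).relIndex
          (Subgroup.map (MulAut.conj u).toMonoidHom K) ≠ 0) ↔
      (∃ L : Subgroup U, L ≤ K ∧ L.Normal ∧ IsOpen {x : K | (x : U) ∈ L}) := by
  constructor
  · intro cm
    obtain ⟨V, hV⟩ := exists_countable_basis (U := U)
    set H : ℕ → Subgroup U := fun n => K ⊓ (V n).toSubgroup with hHdef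
    set S : ℕ → Set U := fun n => {u : U | ∀ x ∈ H n, u⁻¹ * x * u ∈ K} with hSdef
    have hScl : ∀ n, IsClosed (S n) := by
      intro n
      have : S n = ⋂ x : (H n), (fun u : U => u⁻¹ * (x : U) * u) ⁻¹' (K : Set U) := by
        ext u
        simp only [hSdef, Set.mem_setOf_eq, Set.mem_iInter, Set.mem_preimage, SetLike.mem_coe]
        exact ⟨fun h x => h x x.2, fun h x hx => h ⟨x, hx⟩⟩
      rw [this]
      exact isClosed_iInter fun x => hK.preimage (by fun_prop)
    have hScov : ∀ u : U, ∃ n, u ∈ S n := by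
      intro u
      have hcl : IsClosed ((K.map (cj u) ⊓ K : Subgroup U) : Set U) := by
        rw [Subgroup.coe_inf]
        exact (isClosed_mapConj hK u).inter hK
      have hopen := isOpen_subgroupOf_of_relIndex K (K.map (cj u) ⊓ K) hcl (cm u).1
      obtain ⟨O, hO, hOeq⟩ := isOpen_induced_iff.mp hopen
      have h1O : (1 : U) ∈ O := by
        have h1 : (1 : K) ∈ Subtype.val ⁻¹' O := by
          rw [hOeq]
          exact Subgroup.one_mem _
        simpa using h1
      obtain ⟨n, hn⟩ := hV O hO h1O
      refine ⟨n, fun x hx => ?_⟩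
      have hxK : x ∈ K := hx.1
      have hxO : (⟨x, hxK⟩ : K) ∈ Subtype.val ⁻¹' O := hn hx.2
      rw [hOeq] at hxO
      have hx2 : x ∈ K.map (cj u) := (Subgroup.mem_subgroupOf.mp hxO).1
      exact mem_mapConj.mp hx2
    have hbaire : ∃ N, (interior (S N)).Nonempty := by
      apply nonempty_interior_of_iUnion_of_closed hScl
      rw [Set.iUnion_eq_univ_iff]
      exact hScov
    obtain ⟨N, v, hv⟩ := hbaire
    obtain ⟨C, hC, hvC, hCs⟩ :=
      isTopologicalBasis_isClopen.mem_nhds_iff.mp (isOpen_interior.mem_nhds hv)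
    have hD : IsClopen ((fun x : U => v * x) ⁻¹' C) := hC.preimage (continuous_mul_left v)
    have h1D : (1 : U) ∈ (fun x : U => v * x) ⁻¹' C := by simpa using hvC
    obtain ⟨W, hW⟩ := IsTopologicalGroup.exist_openSubgroup_sub_clopen_nhds_of_one hD h1D
    have hvW : ∀ w ∈ W.toSubgroup, ∀ x ∈ H N, (v * w)⁻¹ * x * (v * w) ∈ K := by
      intro w hw
      have : v * w ∈ S N := interior_subset (hCs (hW hw))
      exact this
    set M : Subgroup U := ⨆ (w : U) (_ : w ∈ W.toSubgroup), (H N).map (cj (v * w)⁻¹)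
      with hMdef
    have hgen : ∀ w ∈ W.toSubgroup, (H N).map (cj (v * w)⁻¹) ≤ K := by
      rintro w hw x ⟨y, hy, rfl⟩
      show (v * w)⁻¹ * y * ((v * w)⁻¹)⁻¹ ∈ K
      rw [inv_inv]
      exact hvW w hw y hy
    have hMK : M ≤ K := iSup_le fun w => iSup_le fun hw => hgen w hw
    have hWconj : ∀ w₀ ∈ W.toSubgroup, M.map (cj w₀) ≤ M := by
      intro w₀ hw₀
      rw [hMdef]
      simp only [Subgroup.map_iSup]
      refine iSup_le fun w => iSup_le fun hw => ?_
      rw [← mapConj_mul]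
      have hiden : w₀ * (v * w)⁻¹ = (v * (w * w₀⁻¹))⁻¹ := by group
      rw [hiden]
      exact le_iSup_of_le (w * w₀⁻¹)
        (le_iSup_of_le (mul_mem hw (inv_mem hw₀)) le_rfl)
    have hWeq : ∀ w₀ ∈ W.toSubgroup, M.map (cj w₀) = M := by
      intro w₀ hw₀
      refine le_antisymm (hWconj w₀ hw₀) ?_
      have h2 := Subgroup.map_mono (f := cj w₀) (hWconj w₀⁻¹ (inv_mem hw₀))
      have h3 : (M.map (cj w₀⁻¹)).map (cj w₀) = M := by
        rw [← mapConj_mul, mul_inv_cancel, mapConj_one]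
      rw [h3] at h2
      exact h2
    have hWnormalizer : W.toSubgroup ≤ Subgroup.normalizer (M : Set U) := by
      intro w₀ hw₀
      rw [Subgroup.mem_normalizer_iff]
      intro h
      constructor
      · intro hm
        have h1 : (cj w₀) h ∈ M.map (cj w₀) := Subgroup.mem_map_of_mem _ hm
        rw [hWeq w₀ hw₀] at h1
        simpa [MulAut.conj_apply] using h1
      · intro hm
        rw [← hWeq w₀ hw₀, mem_mapConj] at hm
        have e : w₀⁻¹ * (w₀ * h * w₀⁻¹) * w₀ = h := by group
        rwa [e] at hm
    haveI : Finite (U ⧸ W.toSubgroup) := Subgroup.quotient_finite_of_isOpen _ W.isOpen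
    haveI : W.toSubgroup.FiniteIndex := Subgroup.finiteIndex_of_finite_quotient
    haveI : (Subgroup.normalizer (M : Set U)).FiniteIndex := Subgroup.finiteIndex_of_le hWnormalizer
    haveI : Finite (U ⧸ Subgroup.normalizer (M : Set U)) := Subgroup.finite_quotient_of_finiteIndex
    have hnor : ∀ n ∈ Subgroup.normalizer (M : Set U), M.map (cj n) = M := by
      intro n hn
      ext x
      rw [mem_mapConj]
      exact (Subgroup.mem_normalizer_iff''.mp hn x).symm
    have hwd : ∀ a b : U, a⁻¹ * b ∈ Subgroup.normalizer (M : Set U) → M.map (cj a) = M.map (cj b) := by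
      intro a b hab
      have hb : b = a * (a⁻¹ * b) := by group
      rw [hb, mapConj_mul, hnor _ hab]
    set L : Subgroup U := ⨅ q : U ⧸ Subgroup.normalizer (M : Set U), M.map (cj (Quotient.out q)) with hLdef
    have hLle : ∀ g : U, L ≤ M.map (cj g) := by
      intro g
      have h1 : M.map (cj (Quotient.out (QuotientGroup.mk g : U ⧸ Subgroup.normalizer (M : Set U))))
          = M.map (cj g) := by
        apply hwd
        exact QuotientGroup.eq.mp (QuotientGroup.out_eq' (QuotientGroup.mk g))
      exact h1 ▸ iInf_le _ _
    have hLM : L ≤ M := by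
      have h1 := hLle 1
      rwa [mapConj_one] at h1
    have hLnormal : L.Normal := by
      constructor
      intro x hx g
      rw [hLdef, Subgroup.mem_iInf]
      intro q
      have hx2 : x ∈ M.map (cj (g⁻¹ * Quotient.out q)) := hLle _ hx
      rw [mapConj_mul, mem_mapConj, inv_inv] at hx2
      exact hx2
    refine ⟨L, hLM.trans hMK, hLnormal, ?_⟩
    have hset : {x : K | (x : U) ∈ L}
        = ⋂ q : U ⧸ Subgroup.normalizer (M : Set U),
            (((M.map (cj (Quotient.out q))).subgroupOf K : Subgroup K) : Set K) := by
      ext x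
      simp [hLdef, Subgroup.mem_iInf, Subgroup.mem_subgroupOf]
    rw [hset]
    apply isOpen_iInter_of_finite
    intro q
    set u := Quotient.out q with hu
    have hsub : (H N).map (cj (u * v⁻¹)) ≤ M.map (cj u) := by
      rw [mapConj_mul]
      apply Subgroup.map_mono
      have h1 : (H N).map (cj (v * 1)⁻¹) ≤ M :=
        le_iSup_of_le 1 (le_iSup_of_le (one_mem _) le_rfl)
      simpa using h1
    have hsub' : ((H N).map (cj (u * v⁻¹))).subgroupOf K
        ≤ (M.map (cj u)).subgroupOf K := by
      intro x hx
      rw [Subgroup.mem_subgroupOf] at hx ⊢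
      exact hsub hx
    exact Subgroup.isOpen_mono hsub' (keyOpen K hK (V N) (cm (u * v⁻¹)).1)
  · rintro ⟨L, hLK, hLnormal, hLopen⟩ u
    haveI : CompactSpace K := isCompact_iff_compactSpace.mp hK.isCompact
    have hLopen' : IsOpen ((L.subgroupOf K : Subgroup K) : Set K) := by
      have : ((L.subgroupOf K : Subgroup K) : Set K) = {x : K | (x : U) ∈ L} := by
        ext x
        simp [Subgroup.mem_subgroupOf]
      rw [this]
      exact hLopen
    haveI : Finite (K ⧸ L.subgroupOf K) := Subgroup.quotient_finite_of_isOpen _ hLopen'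
    haveI : (L.subgroupOf K).FiniteIndex := Subgroup.finiteIndex_of_finite_quotient
    have hrel : L.relIndex K ≠ 0 := Subgroup.FiniteIndex.index_ne_zero (H := L.subgroupOf K)
    have hLinf : L ≤ K.map (cj u) ⊓ K := by
      intro x hx
      refine Subgroup.mem_inf.mpr ⟨?_, hLK hx⟩
      rw [mem_mapConj]
      have := hLnormal.conj_mem x hx u⁻¹
      rw [inv_inv] at this
      exact hLK this
    constructor
    · intro h0
      exact hrel (Subgroup.relIndex_eq_zero_of_le_left hLinf h0)
    · intro h0
      have hcom : Subgroup.comap (cj u) L = L := by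
        ext x
        rw [Subgroup.mem_comap]
        show u * x * u⁻¹ ∈ L ↔ x ∈ L
        constructor
        · intro h
          have h2 := hLnormal.conj_mem _ h u⁻¹
          have e : u⁻¹ * (u * x * u⁻¹) * u⁻¹⁻¹ = x := by group
          rwa [e] at h2
        · intro h
          exact hLnormal.conj_mem x h u
      have hrel2 : L.relIndex (K.map (cj u)) ≠ 0 := by
        rw [← Subgroup.relIndex_comap, hcom]
        exact hrel
      exact hrel2 (Subgroup.relIndex_eq_zero_of_le_left hLinf h0)
end

section
/- Let G be a compact topological group with trivial centre and suppose G = G₁ × ⋯ × G_n is an internal direct product of finitely many directly indecomposable closed subgroups. Then every indecomposable direct factor of G equals some G_i; consequently G has exactly 2ⁿ direct factors, and the set {G₁,…,G_n} is permuted by every automorphism of G. -/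
open scoped Pointwise


/-- `H` is a direct factor of the ambient topological group: `H` is closed and
`G = H × C_G(H)` internally. -/
def IsDirectFactor {G : Type*} [Group G] [TopologicalSpace G] (H : Subgroup G) : Prop :=
  IsClosed (H : Set G) ∧ H ⊓ Subgroup.centralizer (H : Set G) = ⊥ ∧
    H ⊔ Subgroup.centralizer (H : Set G) = ⊤

/-- `H` is (non-trivial and) directly indecomposable: it admits no internal direct product
decomposition into two non-trivial subgroups. -/
def IsIndecomposable {G : Type*} [Group G] (H : Subgroup G) : Prop :=
  H ≠ ⊥ ∧ ¬ ∃ B C : Subgroup G, B ≤ H ∧ C ≤ H ∧ B ≠ ⊥ ∧ C ≠ ⊥ ∧ B ⊓ C = ⊥ ∧ B ⊔ C = H ∧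
    (∀ x ∈ B, ∀ y ∈ C, x * y = y * x)

section Helpers

variable {G : Type*} [Group G]

/-- Algebraic direct factor. -/
def AlgFactor (K : Subgroup G) : Prop :=
  K ⊓ Subgroup.centralizer (K : Set G) = ⊥ ∧ K ⊔ Subgroup.centralizer (K : Set G) = ⊤

lemma mem_normalizer_of_commutes {H : Subgroup G} {x : G}
    (h : ∀ y ∈ H, x * y = y * x) : x ∈ Subgroup.normalizer (H : Set G) := by
  rw [Subgroup.mem_normalizer_iff]
  intro g
  constructor
  · intro hg
    have := h g hg
    have : x * g * x⁻¹ = g := by rw [this]; group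
    rwa [this]
  · intro hg
    have h2 := h _ hg
    have hgg : g = x⁻¹ * (x * g * x⁻¹) * x := by group
    have h3 : x⁻¹ * (x * g * x⁻¹) * x = x * g * x⁻¹ := by
      rw [mul_assoc, ← h2]; group
    rw [hgg, h3]; exact hg

lemma AlgFactor.normal {K : Subgroup G} (h : AlgFactor K) : K.Normal := by
  have hle : K ⊔ Subgroup.centralizer (K : Set G) ≤ Subgroup.normalizer (K : Set G) := by
    refine sup_le Subgroup.le_normalizer ?_
    intro x hx
    exact mem_normalizer_of_commutes fun y hy => ((Subgroup.mem_centralizer_iff.mp hx) y hy).symm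
  rw [h.2, top_le_iff] at hle
  exact Subgroup.normalizer_eq_top_iff.mp hle

lemma AlgFactor.normal_centralizer {K : Subgroup G} (h : AlgFactor K) :
    (Subgroup.centralizer (K : Set G)).Normal := by
  have hle : K ⊔ Subgroup.centralizer (K : Set G) ≤
      Subgroup.normalizer ((Subgroup.centralizer (K : Set G) : Subgroup G) : Set G) := by
    refine sup_le ?_ Subgroup.le_normalizer
    intro x hx
    exact mem_normalizer_of_commutes fun y hy => (Subgroup.mem_centralizer_iff.mp hy) x hx
  rw [h.2, top_le_iff] at hle
  exact Subgroup.normalizer_eq_top_iff.mp hle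

lemma exists_mul_of_mem_sup {H N : Subgroup G} (hN : N.Normal) {x : G} (hx : x ∈ H ⊔ N) :
    ∃ h ∈ H, ∃ n ∈ N, h * n = x := by
  have : x ∈ ((H ⊔ N : Subgroup G) : Set G) := hx
  rw [Subgroup.mul_normal H N] at this
  exact this

/-- unique decomposition over two subgroups with trivial intersection -/
lemma eq_of_mul_eq_mul {A B : Subgroup G} (hAB : A ⊓ B = ⊥) {a1 a2 b1 b2 : G}
    (ha1 : a1 ∈ A) (ha2 : a2 ∈ A) (hb1 : b1 ∈ B) (hb2 : b2 ∈ B)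
    (h : a1 * b1 = a2 * b2) : a1 = a2 ∧ b1 = b2 := by
  have key : a2⁻¹ * a1 = b2 * b1⁻¹ := by
    have h' : a2⁻¹ * (a1 * b1) * b1⁻¹ = a2⁻¹ * (a2 * b2) * b1⁻¹ := by rw [h]
    calc a2⁻¹ * a1 = a2⁻¹ * (a1 * b1) * b1⁻¹ := by group
    _ = a2⁻¹ * (a2 * b2) * b1⁻¹ := h'
    _ = b2 * b1⁻¹ := by group
  have hmem : a2⁻¹ * a1 ∈ A ⊓ B := by
    refine ⟨A.mul_mem (A.inv_mem ha2) ha1, ?_⟩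
    rw [key]; exact B.mul_mem hb2 (B.inv_mem hb1)
  rw [hAB, Subgroup.mem_bot] at hmem
  have h1 : a1 = a2 := by
    calc a1 = a2 * (a2⁻¹ * a1) := by group
    _ = a2 := by rw [hmem, mul_one]
  refine ⟨h1, ?_⟩
  have : b2 * b1⁻¹ = 1 := by rw [← key, hmem]
  calc b1 = (b2 * b1⁻¹)⁻¹ * b2 := by group
  _ = b2 := by rw [this]; group

lemma double_centralizer (hZ : Subgroup.center G = ⊥) {N : Subgroup G} (hN : AlgFactor N) :
    Subgroup.centralizer ((Subgroup.centralizer (N : Set G) : Subgroup G) : Set G) = N := by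
  apply le_antisymm
  · intro x hx
    have hx' : x ∈ N ⊔ Subgroup.centralizer (N : Set G) := hN.2 ▸ Subgroup.mem_top x
    obtain ⟨a, ha, c, hc, hac⟩ := exists_mul_of_mem_sup hN.normal_centralizer hx'
    have hcc : c ∈ Subgroup.centralizer
        ((Subgroup.centralizer (N : Set G) : Subgroup G) : Set G) := by
      have haCC : a ∈ Subgroup.centralizer
          ((Subgroup.centralizer (N : Set G) : Subgroup G) : Set G) := by
        rw [Subgroup.mem_centralizer_iff]
        intro g hg
        exact ((Subgroup.mem_centralizer_iff.mp hg) a ha).symm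
      have : c = a⁻¹ * x := by rw [← hac]; group
      rw [this]
      exact Subgroup.mul_mem _ (Subgroup.inv_mem _ haCC) hx
    have hcz : c ∈ Subgroup.center G := by
      rw [Subgroup.mem_center_iff]
      intro g
      have hg : g ∈ N ⊔ Subgroup.centralizer (N : Set G) := hN.2 ▸ Subgroup.mem_top g
      obtain ⟨n', hn', c', hc', rfl⟩ := exists_mul_of_mem_sup hN.normal_centralizer hg
      have h1 : n' * c = c * n' := (Subgroup.mem_centralizer_iff.mp hc) n' hn'
      have h2 : c' * c = c * c' := (Subgroup.mem_centralizer_iff.mp hcc) c' hc'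
      rw [mul_assoc, h2, ← mul_assoc, h1, mul_assoc]
    rw [hZ, Subgroup.mem_bot] at hcz
    rw [← hac, hcz, mul_one]
    exact ha
  · intro n hn
    rw [Subgroup.mem_centralizer_iff]
    intro c hc
    exact ((Subgroup.mem_centralizer_iff.mp hc) n hn).symm

/-- Key decomposition lemma: an algebraic direct factor `N` decomposes over any internal direct
product decomposition `G = A × B` into normal subgroups. -/
lemma factor_decomp (hZ : Subgroup.center G = ⊥) {N A B : Subgroup G}
    (hN : AlgFactor N) (hBn : B.Normal)
    (hAB : A ⊓ B = ⊥) (hABt : A ⊔ B = ⊤)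
    (hcomm : ∀ a ∈ A, ∀ b ∈ B, a * b = b * a) :
    N = (N ⊓ A) ⊔ (N ⊓ B) := by
  apply le_antisymm
  · intro x hx
    have hx' : x ∈ A ⊔ B := hABt ▸ Subgroup.mem_top x
    obtain ⟨a, ha, b, hb, hab⟩ := exists_mul_of_mem_sup hBn hx'
    have haN : a ∈ N := by
      rw [← double_centralizer hZ hN]
      rw [Subgroup.mem_centralizer_iff]
      intro c hc
      have hc' : c ∈ A ⊔ B := hABt ▸ Subgroup.mem_top c
      obtain ⟨cA, hcA, cB, hcB, hcab⟩ := exists_mul_of_mem_sup hBn hc'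
      have hxc : x * c = c * x := Subgroup.mem_centralizer_iff.mp hc x hx
      have e1 : (a * cA) * (b * cB) = (cA * a) * (cB * b) := by
        have l : (a * cA) * (b * cB) = x * c := by
          rw [← hab, ← hcab]
          have h := hcomm cA hcA b hb
          calc a * cA * (b * cB) = a * (cA * b) * cB := by group
          _ = a * (b * cA) * cB := by rw [h]
          _ = a * b * (cA * cB) := by group
        have r : (cA * a) * (cB * b) = c * x := by
          rw [← hab, ← hcab]
          have h := hcomm a ha cB hcB
          calc cA * a * (cB * b) = cA * (a * cB) * b := by group
          _ = cA * (cB * a) * b := by rw [h]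
          _ = cA * cB * (a * b) := by group
        rw [l, r, hxc]
      have hu := eq_of_mul_eq_mul hAB (A.mul_mem ha hcA) (A.mul_mem hcA ha)
        (B.mul_mem hb hcB) (B.mul_mem hcB hb) e1
      have haA : a * cA = cA * a := hu.1
      have h2 : a * cB = cB * a := hcomm a ha cB hcB
      rw [← hcab]
      calc cA * cB * a = cA * (cB * a) := by group
      _ = cA * (a * cB) := by rw [h2]
      _ = (cA * a) * cB := by group
      _ = (a * cA) * cB := by rw [haA]
      _ = a * (cA * cB) := by group
    have hbN : b ∈ N := by
      have hb' : b = a⁻¹ * x := by rw [← hab]; group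
      rw [hb']; exact N.mul_mem (N.inv_mem haN) hx
    rw [← hab]
    exact Subgroup.mul_mem_sup ⟨haN, ha⟩ ⟨hbN, hb⟩
  · exact sup_le inf_le_left inf_le_left

lemma centralizer_isClosed' [TopologicalSpace G] [IsTopologicalGroup G] [T2Space G] (s : Set G) :
    IsClosed ((Subgroup.centralizer s : Subgroup G) : Set G) := by
  have h : ((Subgroup.centralizer s : Subgroup G) : Set G) = ⋂ g ∈ s, {x : G | g * x = x * g} := by
    ext x
    simp [Subgroup.mem_centralizer_iff, Set.mem_iInter]
  rw [h]
  refine isClosed_biInter fun g _ => ?_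
  exact isClosed_eq (continuous_const.mul continuous_id) (continuous_id.mul continuous_const)

lemma map_centralizer_eq (φ : G ≃* G) (H : Subgroup G) :
    Subgroup.centralizer ((Subgroup.map φ.toMonoidHom H : Subgroup G) : Set G) =
      Subgroup.map φ.toMonoidHom (Subgroup.centralizer (H : Set G)) := by
  ext x
  rw [Subgroup.mem_centralizer_iff]
  simp only [Subgroup.mem_map]
  constructor
  · intro h
    refine ⟨φ.symm x, ?_, by simp⟩
    rw [Subgroup.mem_centralizer_iff]
    intro g hg
    apply φ.injective
    rw [map_mul, map_mul, MulEquiv.apply_symm_apply]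
    exact h (φ g) ⟨g, hg, rfl⟩
  · rintro ⟨y, hy, rfl⟩
    intro g hg
    obtain ⟨h, hh, rfl⟩ : ∃ h ∈ H, φ.toMonoidHom h = g := hg
    have hc := Subgroup.mem_centralizer_iff.mp hy h hh
    show φ.toMonoidHom h * φ.toMonoidHom y = φ.toMonoidHom y * φ.toMonoidHom h
    rw [← map_mul, ← map_mul, hc]

lemma map_symm_map (φ : G ≃* G) (H : Subgroup G) :
    Subgroup.map φ.symm.toMonoidHom (Subgroup.map φ.toMonoidHom H) = H := by
  rw [Subgroup.map_equiv_eq_comap_symm', MulEquiv.symm_symm,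
    Subgroup.comap_map_eq_self_of_injective φ.injective]

end Helpers

/-- For a compact group `G` with trivial centre written as an internal direct product of
finitely many indecomposable closed normal subgroups `A 1, …, A n`: every indecomposable
direct factor of `G` is one of the `A i`; `G` has exactly `2 ^ n` direct factors; and every
topological automorphism of `G` permutes the family `{A i}`. -/
theorem stmt_16 {G : Type*} [Group G] [TopologicalSpace G] [IsTopologicalGroup G]
    [CompactSpace G] [T2Space G]
    (hZ : Subgroup.center G = ⊥) (n : ℕ) (A : Fin n → Subgroup G)
    (hclosed : ∀ i, IsClosed ((A i : Subgroup G) : Set G))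
    (hnorm : ∀ i, (A i).Normal)
    (hindep : iSupIndep A)
    (hsup : ⨆ i, A i = ⊤)
    (hindec : ∀ i, IsIndecomposable (A i)) :
    (∀ K : Subgroup G, IsDirectFactor K → IsIndecomposable K → ∃ i, K = A i) ∧
      Nat.card {K : Subgroup G // IsDirectFactor K} = 2 ^ n ∧
      (∀ φ : G ≃* G, Continuous φ → Continuous φ.symm →
        ∀ i, ∃ j, Subgroup.map φ.toMonoidHom (A i) = A j) := by
  classical
  have hdisj : ∀ i j, i ≠ j → Disjoint (A i) (A j) := by
    intro i j hij
    exact (hindep i).mono_right (le_iSup₂ (f := fun j _ => A j) j hij.symm)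
  have hAcomm : ∀ i j, i ≠ j → ∀ x ∈ A i, ∀ y ∈ A j, x * y = y * x := fun i j hij x hx y hy =>
    Subgroup.commute_of_normal_of_disjoint _ _ (hnorm i) (hnorm j) (hdisj i j hij) x y hx hy
  set M : Finset (Fin n) → Subgroup G := fun s => s.sup A with hM
  have hMle : ∀ s i, i ∈ s → A i ≤ M s := fun s i hi => Finset.le_sup hi
  have hMle' : ∀ (s) (K : Subgroup G), (∀ i ∈ s, A i ≤ K) → M s ≤ K := fun s K h =>
    Finset.sup_le h
  have hMuniv : M Finset.univ = ⊤ := by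
    rw [← hsup]
    exact le_antisymm (hMle' _ _ fun i _ => le_iSup A i)
      (iSup_le fun i => hMle _ i (Finset.mem_univ i))
  have hMsup : ∀ s t, M s ⊔ M t = M (s ∪ t) := fun s t => (Finset.sup_union).symm
  have hMnormal : ∀ s, (M s).Normal := by
    intro s
    induction s using Finset.induction_on with
    | empty =>
      simp only [hM, Finset.sup_empty]
      infer_instance
    | insert _ _ ha ih =>
      simp only [hM, Finset.sup_insert]
      simp only [hM] at ih
      exact @Subgroup.sup_normal _ _ _ _ (hnorm _) ih
  have hMcompact : ∀ s, IsCompact ((M s : Subgroup G) : Set G) := by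
    intro s
    induction s using Finset.induction_on with
    | empty =>
      simp only [hM, Finset.sup_empty, Subgroup.coe_bot]
      exact isCompact_singleton
    | @insert a s ha ih =>
      haveI := hMnormal s
      have h : ((M (insert a s) : Subgroup G) : Set G) = (A a : Set G) * (M s : Set G) := by
        simp only [hM, Finset.sup_insert]
        exact Subgroup.mul_normal (A a) (s.sup A)
      rw [h]
      exact ((hclosed a).isCompact).mul ih
  have hMclosed : ∀ s, IsClosed ((M s : Subgroup G) : Set G) := fun s => (hMcompact s).isClosed
  have hMcent : ∀ (s : Finset (Fin n)) (j), j ∉ s →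
      M s ≤ Subgroup.centralizer ((A j : Subgroup G) : Set G) := by
    intro s j hj
    refine hMle' _ _ fun i hi x hx => ?_
    rw [Subgroup.mem_centralizer_iff]
    intro y hy
    exact hAcomm j i (fun e => hj (e ▸ hi)) y hy x hx
  have hMcent2 : ∀ s : Finset (Fin n), M sᶜ ≤ Subgroup.centralizer ((M s : Subgroup G) : Set G) := by
    intro s
    refine hMle' _ _ fun j hj x hx => ?_
    rw [Subgroup.mem_centralizer_iff]
    intro y hy
    have hyc : y ∈ Subgroup.centralizer ((A j : Subgroup G) : Set G) :=
      hMcent s j (Finset.mem_compl.mp hj) hy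
    exact (Subgroup.mem_centralizer_iff.mp hyc x hx).symm
  have hsupcompl : ∀ s : Finset (Fin n), M s ⊔ M sᶜ = ⊤ := by
    intro s; rw [hMsup, Finset.union_compl, hMuniv]
  have hMfac : ∀ s, AlgFactor (M s) := by
    intro s
    constructor
    · rw [eq_bot_iff]
      rintro x ⟨hx1, hx2⟩
      have hxz : x ∈ Subgroup.center G := by
        rw [Subgroup.mem_center_iff]
        intro g
        have hg : g ∈ M s ⊔ M sᶜ := (hsupcompl s) ▸ Subgroup.mem_top g
        obtain ⟨u, hu, v, hv, rfl⟩ := exists_mul_of_mem_sup (hMnormal sᶜ) hg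
        have h1 : u * x = x * u := Subgroup.mem_centralizer_iff.mp hx2 u hu
        have h2 : x * v = v * x :=
          Subgroup.mem_centralizer_iff.mp (hMcent2 s hv) x hx1
        calc u * v * x = u * (v * x) := by group
        _ = u * (x * v) := by rw [← h2]
        _ = (u * x) * v := by group
        _ = (x * u) * v := by rw [h1]
        _ = x * (u * v) := by group
      rw [hZ, Subgroup.mem_bot] at hxz
      simp [hxz]
    · rw [eq_top_iff, ← hsupcompl s]
      exact sup_le le_sup_left (le_trans (hMcent2 s) le_sup_right)
  have hMdf : ∀ s, IsDirectFactor (M s) := fun s => ⟨hMclosed s, (hMfac s).1, (hMfac s).2⟩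
  have hMsingle : ∀ i, M {i} = A i := fun i => Finset.sup_singleton
  have hAfac : ∀ i, AlgFactor (A i) := by
    intro i
    have := hMfac {i}
    rwa [hMsingle i] at this
  have hsplit : ∀ K : Subgroup G, AlgFactor K → ∀ i, A i ≤ K ∨ A i ⊓ K = ⊥ := by
    intro K hK i
    have hdec := factor_decomp hZ (hAfac i) hK.normal_centralizer hK.1 hK.2
      (fun a ha b hb => Subgroup.mem_centralizer_iff.mp hb a ha)
    by_cases h1 : A i ⊓ K = ⊥
    · exact Or.inr h1
    · left
      by_cases h2 : A i ⊓ Subgroup.centralizer (K : Set G) = ⊥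
      · rw [h2, sup_bot_eq] at hdec
        rw [hdec]; exact inf_le_right
      · exfalso
        refine (hindec i).2 ⟨A i ⊓ K, A i ⊓ Subgroup.centralizer (K : Set G), inf_le_left,
          inf_le_left, h1, h2, ?_, hdec.symm,
          fun x hx y hy => Subgroup.mem_centralizer_iff.mp hy.2 x hx.2⟩
        rw [eq_bot_iff, ← hK.1]
        exact le_inf (le_trans inf_le_left inf_le_right) (le_trans inf_le_right inf_le_right)
  have part1 : ∀ K : Subgroup G, IsDirectFactor K → IsIndecomposable K → ∃ i, K = A i := by
    intro K hK hKind
    have hKfac : AlgFactor K := ⟨hK.2.1, hK.2.2⟩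
    have hKn : K.Normal := hKfac.normal
    have hex : ∃ i, A i ≤ K := by
      by_contra h
      push_neg at h
      have hbot : ∀ i, A i ⊓ K = ⊥ := fun i => (hsplit K hKfac i).resolve_left (h i)
      have hKcen : K ≤ Subgroup.center G := by
        intro k hk
        rw [Subgroup.mem_center_iff]
        intro g
        have hg : g ∈ ⨆ i, A i := hsup ▸ Subgroup.mem_top g
        have hle : (⨆ i, A i) ≤ Subgroup.centralizer ({k} : Set G) := by
          refine iSup_le fun i x hx => ?_
          rw [Subgroup.mem_centralizer_iff]
          rintro y rfl
          exact Subgroup.commute_of_normal_of_disjoint K (A i) hKn (hnorm i)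
            (disjoint_iff.mpr (by rw [inf_comm]; exact hbot i)) y x hk hx
        exact (Subgroup.mem_centralizer_iff.mp (hle hg) k rfl).symm
      rw [hZ] at hKcen
      exact hKind.1 (le_bot_iff.mp hKcen)
    obtain ⟨i, hi⟩ := hex
    have hdec := factor_decomp hZ hKfac (hAfac i).normal_centralizer (hAfac i).1 (hAfac i).2
      (fun a ha b hb => Subgroup.mem_centralizer_iff.mp hb a ha)
    have hKA : K ⊓ A i = A i := inf_eq_right.mpr hi
    rw [hKA] at hdec
    refine ⟨i, ?_⟩
    by_cases h2 : K ⊓ Subgroup.centralizer ((A i : Subgroup G) : Set G) = ⊥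
    · rw [h2, sup_bot_eq] at hdec; exact hdec
    · exfalso
      refine hKind.2 ⟨A i, K ⊓ Subgroup.centralizer ((A i : Subgroup G) : Set G), hi,
        inf_le_left, (hindec i).1, h2, ?_, hdec.symm,
        fun x hx y hy => Subgroup.mem_centralizer_iff.mp hy.2 x hx⟩
      rw [eq_bot_iff, ← (hAfac i).1]
      exact le_inf inf_le_left (le_trans inf_le_right inf_le_right)
  have hKM : ∀ K : Subgroup G, IsDirectFactor K →
      K = M (Finset.univ.filter (fun i => A i ≤ K)) := by
    intro K hK
    have hKfac : AlgFactor K := ⟨hK.2.1, hK.2.2⟩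
    have hKn : K.Normal := hKfac.normal
    set s := Finset.univ.filter (fun i => A i ≤ K) with hs
    apply le_antisymm
    · intro k hk
      have hk' : k ∈ M s ⊔ M sᶜ := (hsupcompl s) ▸ Subgroup.mem_top k
      obtain ⟨u, hu, v, hv, huv⟩ := exists_mul_of_mem_sup (hMnormal sᶜ) hk'
      have huK : u ∈ K := hMle' s K (fun i hi => (Finset.mem_filter.mp hi).2) hu
      have hvK : v ∈ K := by
        have hv' : v = u⁻¹ * k := by rw [← huv]; group
        rw [hv']; exact K.mul_mem (K.inv_mem huK) hk
      have hMcK : M sᶜ ≤ Subgroup.centralizer (K : Set G) := by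
        refine hMle' _ _ fun j hj x hx => ?_
        have hj' : ¬ A j ≤ K := by
          intro hle
          exact (Finset.mem_compl.mp hj) (Finset.mem_filter.mpr ⟨Finset.mem_univ j, hle⟩)
        have hbotj := (hsplit K hKfac j).resolve_left hj'
        rw [Subgroup.mem_centralizer_iff]
        intro y hy
        exact Subgroup.commute_of_normal_of_disjoint K (A j) hKn (hnorm j)
          (disjoint_iff.mpr (by rw [inf_comm]; exact hbotj)) y x hy hx
      have hvbot : v ∈ K ⊓ Subgroup.centralizer (K : Set G) := ⟨hvK, hMcK hv⟩
      rw [hKfac.1, Subgroup.mem_bot] at hvbot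
      rw [← huv, hvbot, mul_one]
      exact hu
    · exact hMle' _ _ fun i hi => (Finset.mem_filter.mp hi).2
  have hMmono : ∀ s t : Finset (Fin n), M s ≤ M t → s ⊆ t := by
    intro s t h i hi
    by_contra hit
    have h1 : A i ≤ M t := le_trans (hMle s i hi) h
    have h2 : M t ≤ ⨆ j, ⨆ _ : j ≠ i, A j := by
      refine hMle' _ _ fun j hj => ?_
      exact le_iSup₂ (f := fun j _ => A j) j (fun (e : j = i) => hit (e ▸ hj))
    have hbot : A i ≤ ⊥ := (hindep i) le_rfl (le_trans h1 h2)
    exact (hindec i).1 (le_bot_iff.mp hbot)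
  have part2 : Nat.card {K : Subgroup G // IsDirectFactor K} = 2 ^ n := by
    have hbij : Function.Bijective
        (fun s : Finset (Fin n) => (⟨M s, hMdf s⟩ : {K : Subgroup G // IsDirectFactor K})) := by
      constructor
      · intro s t h
        have h' : M s = M t := congrArg Subtype.val h
        exact subset_antisymm (hMmono _ _ (le_of_eq h')) (hMmono _ _ (ge_of_eq h'))
      · rintro ⟨K, hK⟩
        exact ⟨Finset.univ.filter (fun i => A i ≤ K), Subtype.ext (hKM K hK).symm⟩
    rw [← Nat.card_eq_of_bijective _ hbij]
    simp [Nat.card_eq_fintype_card, Fintype.card_finset]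
  refine ⟨part1, part2, ?_⟩
  intro φ hφ hφs i
  apply part1
  · refine ⟨?_, ?_, ?_⟩
    · have himg : ((Subgroup.map φ.toMonoidHom (A i) : Subgroup G) : Set G) =
          φ.symm ⁻¹' ((A i : Subgroup G) : Set G) := by
        ext x
        simp only [Set.mem_preimage, SetLike.mem_coe, Subgroup.mem_map]
        constructor
        · rintro ⟨y, hy, rfl⟩; simpa using hy
        · intro hx; exact ⟨φ.symm x, hx, by simp⟩
      rw [himg]
      exact (hclosed i).preimage hφs
    · rw [map_centralizer_eq, ← Subgroup.map_inf _ _ _ φ.injective, (hAfac i).1,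
        Subgroup.map_bot]
    · rw [map_centralizer_eq, ← Subgroup.map_sup, (hAfac i).2,
        Subgroup.map_top_of_surjective _ φ.surjective]
  · constructor
    · intro hbot
      rw [Subgroup.map_eq_bot_iff_of_injective _ φ.injective] at hbot
      exact (hindec i).1 hbot
    · rintro ⟨B, C, hB, hC, hBne, hCne, hBC, hBCs, hcomm⟩
      refine (hindec i).2 ⟨Subgroup.map φ.symm.toMonoidHom B, Subgroup.map φ.symm.toMonoidHom C,
        ?_, ?_, ?_, ?_, ?_, ?_, ?_⟩
      · have := Subgroup.map_mono (f := φ.symm.toMonoidHom) hB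
        rwa [map_symm_map] at this
      · have := Subgroup.map_mono (f := φ.symm.toMonoidHom) hC
        rwa [map_symm_map] at this
      · intro h
        rw [Subgroup.map_eq_bot_iff_of_injective _ φ.symm.injective] at h
        exact hBne h
      · intro h
        rw [Subgroup.map_eq_bot_iff_of_injective _ φ.symm.injective] at h
        exact hCne h
      · rw [← Subgroup.map_inf _ _ _ φ.symm.injective, hBC, Subgroup.map_bot]
      · rw [← Subgroup.map_sup, hBCs, map_symm_map]
      · rintro x ⟨b, hb, rfl⟩ y ⟨c, hc, rfl⟩
        show φ.symm.toMonoidHom b * φ.symm.toMonoidHom c =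
          φ.symm.toMonoidHom c * φ.symm.toMonoidHom b
        rw [← map_mul, ← map_mul, hcomm b hb c hc]
end

section
/- Let G be a compact group with trivial centre that is not finitely decomposable (i.e. G cannot be written as a finite internal direct product of indecomposable closed subgroups). Then G is topologically isomorphic to an infinite Cartesian product of non-trivial closed subgroups, and G has uncountably many closed direct factors up to commensurability. -/
/-- `H` is a direct factor of the ambient topological group: `H` is closed and
`G = H × C_G(H)` internally. -/
def IsDirectFactor' {G : Type*} [Group G] [TopologicalSpace G] (H : Subgroup G) : Prop :=
  IsClosed (H : Set G) ∧ H ⊓ Subgroup.centralizer (H : Set G) = ⊥ ∧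
    H ⊔ Subgroup.centralizer (H : Set G) = ⊤

/-- `H` is (non-trivial and) directly indecomposable. -/
def IsIndecomposable' {G : Type*} [Group G] (H : Subgroup G) : Prop :=
  H ≠ ⊥ ∧ ¬ ∃ B C : Subgroup G, B ≤ H ∧ C ≤ H ∧ B ≠ ⊥ ∧ C ≠ ⊥ ∧ B ⊓ C = ⊥ ∧ B ⊔ C = H ∧
    (∀ x ∈ B, ∀ y ∈ C, x * y = y * x)

open Subgroup Topology Pointwise
set_option linter.unusedSectionVars false
set_option linter.unusedVariables false
set_option maxHeartbeats 1000000

section PureGroup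
variable {G : Type*} [Group G]

lemma coe_sup_of_comm (H K : Subgroup G) (h : K ≤ centralizer (H : Set G)) :
    ((H ⊔ K : Subgroup G) : Set G) = (H : Set G) * (K : Set G) := by
  have hsub : ∃ L : Subgroup G, (L : Set G) = (H : Set G) * (K : Set G) ∧ H ≤ L ∧ K ≤ L := by
    refine ⟨{ carrier := (H : Set G) * (K : Set G),
              one_mem' := ⟨1, one_mem H, 1, one_mem K, by simp⟩,
              mul_mem' := ?_, inv_mem' := ?_ }, rfl, ?_, ?_⟩
    · rintro a b ⟨x, hx, y, hy, rfl⟩ ⟨x', hx', y', hy', rfl⟩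
      refine ⟨x * x', mul_mem hx hx', y * y', mul_mem hy hy', ?_⟩
      have hc : y * x' = x' * y := (mem_centralizer_iff.mp (h hy) x' hx').symm
      simp only [mul_assoc]
      rw [← mul_assoc y x' y', hc, mul_assoc]
    · rintro a ⟨x, hx, y, hy, rfl⟩
      refine ⟨x⁻¹, inv_mem hx, y⁻¹, inv_mem hy, ?_⟩
      have hc : x⁻¹ * y⁻¹ = y⁻¹ * x⁻¹ :=
        mem_centralizer_iff.mp (h (inv_mem hy)) x⁻¹ (inv_mem hx)
      rw [mul_inv_rev]
      exact hc
    · intro x hx; exact ⟨x, hx, 1, one_mem K, by simp⟩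
    · intro y hy; exact ⟨1, one_mem H, y, hy, by simp⟩
  obtain ⟨L, hL, hHL, hKL⟩ := hsub
  apply le_antisymm
  · have : H ⊔ K ≤ L := sup_le hHL hKL
    intro x hx; rw [← hL]; exact this hx
  · rintro x ⟨a, ha, b, hb, rfl⟩
    exact mul_mem (le_sup_left (α := Subgroup G) ha : a ∈ H ⊔ K)
      ((le_sup_right : K ≤ H ⊔ K) hb)

lemma inf_centralizer_le_centralizer_sup (B C : Subgroup G) :
    centralizer (B : Set G) ⊓ centralizer (C : Set G) ≤ centralizer ((B ⊔ C : Subgroup G) : Set G) := by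
  intro z hz
  rw [mem_centralizer_iff]
  intro h hh
  have : h ∈ B ⊔ C := hh
  have key : ∀ w ∈ B ⊔ C, w * z = z * w := by
    intro w hw
    rw [sup_eq_closure_mul] at hw
    refine closure_induction ?_ (by simp) ?_ ?_ hw
    · rintro x ⟨a, ha, b, hb, rfl⟩
      have h1 := mem_centralizer_iff.mp hz.1 a ha
      have h2 := mem_centralizer_iff.mp hz.2 b hb
      rw [mul_assoc, h2, ← mul_assoc, h1, mul_assoc]
    · intro x y _ _ hx hy
      rw [mul_assoc, hy, ← mul_assoc, hx, mul_assoc]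
    · intro x _ hx
      have : z * x = x * z := hx.symm
      calc x⁻¹ * z = x⁻¹ * z * x * x⁻¹ := by group
        _ = x⁻¹ * (z * x) * x⁻¹ := by group
        _ = x⁻¹ * (x * z) * x⁻¹ := by rw [this]
        _ = z * x⁻¹ := by group
  exact key h this

end PureGroup

section Top
variable {G : Type*} [Group G] [TopologicalSpace G] [IsTopologicalGroup G]
  [CompactSpace G] [T2Space G]

lemma isClosed_centralizer (s : Set G) : IsClosed ((centralizer s : Subgroup G) : Set G) := by
  have h : ((centralizer s : Subgroup G) : Set G) = ⋂ h ∈ s, {g | h * g = g * h} := by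
    ext g; simp [Subgroup.mem_centralizer_iff, Set.mem_iInter]
  rw [h]
  exact isClosed_biInter fun h _ => isClosed_eq (continuous_const.mul continuous_id)
    (continuous_id.mul continuous_const)

variable (H : Subgroup G)

/-- multiplication map as a monoid hom -/
def fmul : (H × centralizer (H : Set G)) →* G where
  toFun p := (p.1 : G) * (p.2 : G)
  map_one' := by simp
  map_mul' p q := by
    have hc : (q.1 : G) * (p.2 : G) = (p.2 : G) * (q.1 : G) :=
      mem_centralizer_iff.mp p.2.2 q.1 q.1.2
    show ((p.1 * q.1 : H) : G) * ((p.2 * q.2 : centralizer (H : Set G)) : G)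
      = ((p.1 : G) * p.2) * ((q.1 : G) * q.2)
    push_cast
    rw [mul_assoc, ← mul_assoc (q.1 : G), hc]
    group

variable {H}

lemma fmul_bijective (h : IsDirectFactor' H) : Function.Bijective (fmul H) := by
  constructor
  · rw [injective_iff_map_eq_one]
    rintro ⟨a, b⟩ hab
    have hab' : (a : G) * b = 1 := hab
    have ha : (a : G) = (b : G)⁻¹ := by
      rw [eq_inv_iff_mul_eq_one]; exact hab'
    have haC : (a : G) ∈ centralizer (H : Set G) := by
      rw [ha]; exact inv_mem b.2
    have : (a : G) ∈ H ⊓ centralizer (H : Set G) := ⟨a.2, haC⟩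
    rw [h.2.1, Subgroup.mem_bot] at this
    have hb : (b : G) = 1 := by
      rwa [this, one_mul] at hab'
    exact Prod.ext (Subtype.ext this) (Subtype.ext hb)
  · intro g
    have hg : g ∈ ((H ⊔ centralizer (H : Set G) : Subgroup G) : Set G) := by
      rw [h.2.2]; trivial
    rw [coe_sup_of_comm H _ le_rfl] at hg
    obtain ⟨x, hx, y, hy, rfl⟩ := hg
    exact ⟨(⟨x, hx⟩, ⟨y, hy⟩), rfl⟩

/-- the direct-product equivalence for a direct factor -/
noncomputable def facEquiv (h : IsDirectFactor' H) :
    (H × centralizer (H : Set G)) ≃* G :=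
  MulEquiv.ofBijective (fmul H) (fmul_bijective h)

lemma continuous_fmul : Continuous (fmul H) := by
  exact (continuous_subtype_val.comp continuous_fst).mul
    (continuous_subtype_val.comp continuous_snd)

lemma compactSpace_of_isClosed {K : Subgroup G} (hK : IsClosed (K : Set G)) :
    CompactSpace K :=
  isCompact_iff_compactSpace.mp hK.isCompact

lemma continuous_facEquiv_symm (h : IsDirectFactor' H) :
    Continuous (facEquiv h).symm := by
  haveI : CompactSpace H := compactSpace_of_isClosed h.1
  haveI : CompactSpace (centralizer (H : Set G)) :=
    compactSpace_of_isClosed (isClosed_centralizer _)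
  exact (Continuous.homeoOfEquivCompactToT2
    (f := (facEquiv h).toEquiv) continuous_fmul).symm.continuous

/-- projection onto a direct factor -/
noncomputable def facProj (h : IsDirectFactor' H) : G →* H :=
  (MonoidHom.fst _ _).comp (facEquiv h).symm.toMonoidHom

lemma continuous_facProj (h : IsDirectFactor' H) : Continuous (facProj h) :=
  continuous_fst.comp (continuous_facEquiv_symm h)

lemma facProj_apply_eq (h : IsDirectFactor' H) (x : H) (y : centralizer (H : Set G)) :
    facProj h ((x : G) * y) = x := by
  have : ((x : G) * y) = facEquiv h (x, y) := rfl
  rw [this]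
  show ((facEquiv h).symm ((facEquiv h) (x, y))).1 = x
  rw [MulEquiv.symm_apply_apply]

lemma facProj_mem (h : IsDirectFactor' H) {x : G} (hx : x ∈ H) :
    (facProj h x : G) = x := by
  have := facProj_apply_eq h ⟨x, hx⟩ 1
  simpa using congrArg (Subtype.val) this

lemma facProj_centralizer (h : IsDirectFactor' H) {x : G}
    (hx : x ∈ centralizer (H : Set G)) : facProj h x = 1 := by
  have := facProj_apply_eq h 1 ⟨x, hx⟩
  simpa using this

end Top

section Group2
variable {G : Type*} [Group G]

lemma mem_of_mem_sup_of_le {B C X : Subgroup G} (hXB : X ≤ B) (hint : B ⊓ C = ⊥)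
    (hcomm : C ≤ centralizer (B : Set G)) {a : G} (haB : a ∈ B) (ha : a ∈ X ⊔ C) :
    a ∈ X := by
  have hCX : C ≤ centralizer (X : Set G) :=
    hcomm.trans (centralizer_le (SetLike.coe_subset_coe.mpr hXB))
  have hcoe : ((X ⊔ C : Subgroup G) : Set G) = (X : Set G) * (C : Set G) :=
    coe_sup_of_comm _ _ hCX
  have : a ∈ ((X ⊔ C : Subgroup G) : Set G) := ha
  rw [hcoe] at this
  obtain ⟨x, hx, c, hc, rfl⟩ := this
  have hcB : c ∈ B := by
    have : c = x⁻¹ * (x * c) := by group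
    rw [this]
    exact mul_mem (inv_mem (hXB hx)) haB
  have : c ∈ B ⊓ C := ⟨hcB, hc⟩
  rw [hint, Subgroup.mem_bot] at this
  simpa [this] using hx

/-- finite decomposability into closed normal indecomposable pieces -/
def FinDecomp {G : Type*} [Group G] [TopologicalSpace G] (K : Subgroup G) : Prop :=
  ∃ (n : ℕ) (A : Fin n → Subgroup G),
    (∀ i, IsClosed ((A i : Subgroup G) : Set G)) ∧ (∀ i, (A i).Normal) ∧
      (∀ i, IsIndecomposable' (A i)) ∧ iSupIndep A ∧ ⨆ i, A i = K

end Group2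

section Concat
variable {G : Type*} [Group G] [TopologicalSpace G]

lemma finDecomp_bot : FinDecomp (⊥ : Subgroup G) := by
  refine ⟨0, Fin.elim0, fun i => i.elim0, fun i => i.elim0, fun i => i.elim0, ?_, ?_⟩
  · intro i; exact i.elim0
  · simp

lemma finDecomp_sup {B C : Subgroup G} (hB : FinDecomp B) (hC : FinDecomp C)
    (hint : B ⊓ C = ⊥) (hcomm : C ≤ centralizer (B : Set G)) : FinDecomp (B ⊔ C) := by
  obtain ⟨m, A₁, hcl₁, hn₁, hi₁, hind₁, hsup₁⟩ := hB
  obtain ⟨k, A₂, hcl₂, hn₂, hi₂, hind₂, hsup₂⟩ := hC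
  have hBC : B ≤ centralizer (C : Set G) := le_centralizer_iff.mpr hcomm
  set A : Fin (m + k) → Subgroup G := fun i =>
    if h : (i : ℕ) < m then A₁ ⟨i, h⟩
    else A₂ ⟨(i : ℕ) - m, Nat.sub_lt_left_of_lt_add (Nat.le_of_not_lt h) i.isLt⟩ with hA
  have hAleft : ∀ (i : Fin (m + k)) (h : (i : ℕ) < m), A i = A₁ ⟨i, h⟩ := by
    intro i h; simp [hA, h]
  have hAright : ∀ (i : Fin (m + k)) (h : ¬ (i : ℕ) < m), A i = A₂ ⟨(i : ℕ) - m,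
      Nat.sub_lt_left_of_lt_add (Nat.le_of_not_lt h) i.isLt⟩ := by
    intro i h; simp [hA, h]
  have hA1le : ∀ j : Fin m, A₁ j ≤ ⨆ i, A i := by
    intro j
    have : A₁ j = A ⟨(j : ℕ), by omega⟩ := by
      rw [hAleft ⟨(j : ℕ), by omega⟩ j.isLt]
    rw [this]; exact le_iSup A _
  have hA2le : ∀ j : Fin k, A₂ j ≤ ⨆ i, A i := by
    intro j
    have h2 : ¬ ((m + (j : ℕ)) < m) := by omega
    have : A₂ j = A ⟨m + (j : ℕ), by omega⟩ := by
      rw [hAright ⟨m + (j : ℕ), by omega⟩ h2]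
      congr 1
      exact Fin.ext (by simp)
    rw [this]; exact le_iSup A _
  refine ⟨m + k, A, ?_, ?_, ?_, ?_, ?_⟩
  · intro i
    by_cases h : (i : ℕ) < m
    · rw [hAleft i h]; exact hcl₁ _
    · rw [hAright i h]; exact hcl₂ _
  · intro i
    by_cases h : (i : ℕ) < m
    · rw [hAleft i h]; exact hn₁ _
    · rw [hAright i h]; exact hn₂ _
  · intro i
    by_cases h : (i : ℕ) < m
    · rw [hAleft i h]; exact hi₁ _
    · rw [hAright i h]; exact hi₂ _
  · intro i
    by_cases h : (i : ℕ) < m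
    · set i₀ : Fin m := ⟨i, h⟩
      have hle : (⨆ j, ⨆ (_ : j ≠ i), A j) ≤ (⨆ j, ⨆ (_ : j ≠ i₀), A₁ j) ⊔ C := by
        refine iSup_le fun j => iSup_le fun hji => ?_
        by_cases h' : (j : ℕ) < m
        · rw [hAleft j h']
          have hne : (⟨(j : ℕ), h'⟩ : Fin m) ≠ i₀ := by
            intro hji'
            apply hji
            apply Fin.ext
            simpa using congrArg Fin.val hji'
          exact le_trans (le_iSup₂ (f := fun (j : Fin m) (_ : j ≠ i₀) => A₁ j)
            (⟨(j : ℕ), h'⟩ : Fin m) hne) le_sup_left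
        · rw [hAright j h']
          exact le_trans (le_trans (le_iSup A₂ _) hsup₂.le) le_sup_right
      rw [hAleft i h, disjoint_iff, eq_bot_iff]
      rintro a ⟨ha1, ha2⟩
      have ha2' : a ∈ (⨆ j, ⨆ (_ : j ≠ i₀), A₁ j) ⊔ C := hle ha2
      have haB : a ∈ B := hsup₁ ▸ (le_iSup A₁ i₀) ha1
      have haX : a ∈ (⨆ j, ⨆ (_ : j ≠ i₀), A₁ j) := by
        refine mem_of_mem_sup_of_le ?_ hint hcomm haB ha2'
        rw [← hsup₁]
        exact iSup_le fun j => iSup_le fun _ => le_iSup A₁ j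
      exact (disjoint_iff.mp (hind₁ i₀)) ▸ (⟨ha1, haX⟩ : a ∈ A₁ i₀ ⊓ _)
    · set i₀ : Fin k := ⟨(i : ℕ) - m, Nat.sub_lt_left_of_lt_add (Nat.le_of_not_lt h) i.isLt⟩
      have hle : (⨆ j, ⨆ (_ : j ≠ i), A j) ≤ (⨆ j, ⨆ (_ : j ≠ i₀), A₂ j) ⊔ B := by
        refine iSup_le fun j => iSup_le fun hji => ?_
        by_cases h' : (j : ℕ) < m
        · rw [hAleft j h']
          exact le_trans (le_trans (le_iSup A₁ _) hsup₁.le) le_sup_right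
        · rw [hAright j h']
          have hne : (⟨(j : ℕ) - m, Nat.sub_lt_left_of_lt_add (Nat.le_of_not_lt h') j.isLt⟩ : Fin k) ≠ i₀ := by
            intro hji'
            apply hji
            apply Fin.ext
            have hv : (j : ℕ) - m = (i : ℕ) - m := by
              simpa using congrArg Fin.val hji'
            omega
          exact le_trans (le_iSup₂ (f := fun (j : Fin k) (_ : j ≠ i₀) => A₂ j) _ hne) le_sup_left
      rw [hAright i h, disjoint_iff, eq_bot_iff]
      rintro a ⟨ha1, ha2⟩
      have ha2' : a ∈ (⨆ j, ⨆ (_ : j ≠ i₀), A₂ j) ⊔ B := hle ha2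
      have haC : a ∈ C := hsup₂ ▸ (le_iSup A₂ i₀) ha1
      have haX : a ∈ (⨆ j, ⨆ (_ : j ≠ i₀), A₂ j) := by
        refine mem_of_mem_sup_of_le ?_ (by rw [inf_comm]; exact hint) hBC haC ha2'
        rw [← hsup₂]
        exact iSup_le fun j => iSup_le fun _ => le_iSup A₂ j
      exact (disjoint_iff.mp (hind₂ i₀)) ▸ (⟨ha1, haX⟩ : a ∈ A₂ i₀ ⊓ _)
  · apply le_antisymm
    · refine iSup_le fun i => ?_
      by_cases h : (i : ℕ) < m
      · rw [hAleft i h]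
        exact le_trans (le_trans (le_iSup A₁ _) hsup₁.le) le_sup_left
      · rw [hAright i h]
        exact le_trans (le_trans (le_iSup A₂ _) hsup₂.le) le_sup_right
    · refine sup_le ?_ ?_
      · rw [← hsup₁]; exact iSup_le hA1le
      · rw [← hsup₂]; exact iSup_le hA2le

end Concat

section Split
variable {G : Type*} [Group G] [TopologicalSpace G] [IsTopologicalGroup G]
  [CompactSpace G] [T2Space G]

lemma facNormal {H : Subgroup G} (h : IsDirectFactor' H) : H.Normal := by
  constructor
  intro n hn g
  have hg : g ∈ ((H ⊔ centralizer (H : Set G) : Subgroup G) : Set G) := by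
    rw [h.2.2]; trivial
  rw [coe_sup_of_comm H _ le_rfl] at hg
  obtain ⟨x, hx, y, hy, rfl⟩ := hg
  have hyn : y * n * y⁻¹ = n := by
    have hc := mem_centralizer_iff.mp hy n hn
    rw [← hc]; group
  have hxy : x * y * n * (x * y)⁻¹ = x * (y * n * y⁻¹) * x⁻¹ := by group
  rw [hxy, hyn]
  exact mul_mem (mul_mem hx hn) (inv_mem hx)

lemma exists_split (hZ : Subgroup.center G = ⊥) {K : Subgroup G}
    (hK : IsDirectFactor' K) (hKfd : ¬ FinDecomp K) :
    ∃ B C : Subgroup G, IsDirectFactor' B ∧ IsDirectFactor' C ∧ B ≠ ⊥ ∧ C ≠ ⊥ ∧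
      B ⊔ C = K ∧ C ≤ centralizer (B : Set G) ∧ (¬ FinDecomp B ∨ ¬ FinDecomp C) := by
  have hKne : K ≠ ⊥ := fun h => hKfd (h ▸ finDecomp_bot)
  have hKnotind : ¬ IsIndecomposable' K := by
    intro hind
    apply hKfd
    refine ⟨1, fun _ => K, fun _ => hK.1, fun _ => facNormal hK, fun _ => hind, ?_, ?_⟩
    · intro i
      have hsup : (⨆ j, ⨆ (_ : j ≠ i), (fun _ : Fin 1 => K) j) = ⊥ := by
        refine iSup_eq_bot.mpr fun j => iSup_eq_bot.mpr fun hj => ?_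
        exact absurd (Subsingleton.elim j i) hj
      rw [hsup]
      exact disjoint_bot_right
    · exact iSup_const
  have hex : ∃ B C : Subgroup G, B ≤ K ∧ C ≤ K ∧ B ≠ ⊥ ∧ C ≠ ⊥ ∧ B ⊓ C = ⊥ ∧ B ⊔ C = K ∧
      (∀ x ∈ B, ∀ y ∈ C, x * y = y * x) := by
    rw [IsIndecomposable'] at hKnotind
    push_neg at hKnotind
    exact hKnotind hKne
  obtain ⟨B, C, hBK, hCK, hBne, hCne, hBCint, hBCsup, hcomm⟩ := hex
  have hCcent : C ≤ centralizer (B : Set G) := fun y hy =>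
    mem_centralizer_iff.mpr fun x hx => hcomm x hx y hy
  set Bs : Subgroup G := centralizer (C : Set G) ⊓ K with hBs
  set Cs : Subgroup G := centralizer (Bs : Set G) ⊓ K with hCs
  have hBBs : B ≤ Bs := le_inf (le_centralizer_iff.mpr hCcent) hBK
  have hCCs : C ≤ Cs := le_inf (le_centralizer_iff.mpr inf_le_left) hCK
  have hBsK : Bs ≤ K := inf_le_right
  have hCsK : Cs ≤ K := inf_le_right
  have hCsCent : Cs ≤ centralizer (Bs : Set G) := inf_le_left
  have hBsCent : Bs ≤ centralizer (Cs : Set G) := le_centralizer_iff.mpr hCsCent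
  have hsup' : Bs ⊔ Cs = K := by
    apply le_antisymm (sup_le hBsK hCsK)
    rw [← hBCsup]
    exact sup_le_sup hBBs hCCs
  have hcent_inf : centralizer (Bs : Set G) ⊓ centralizer (Cs : Set G) ≤
      centralizer (K : Set G) := by
    rw [← hsup']
    exact inf_centralizer_le_centralizer_sup Bs Cs
  have hmeet : Bs ⊓ Cs = ⊥ := by
    rw [eq_bot_iff]
    rintro z ⟨hz1, hz2⟩
    have hzK : z ∈ K ⊓ centralizer (K : Set G) :=
      ⟨hBsK hz1, hcent_inf ⟨hCsCent hz2, hBsCent hz1⟩⟩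
    rwa [hK.2.1] at hzK
  have hcentK_Bs : centralizer (K : Set G) ≤ centralizer (Bs : Set G) :=
    centralizer_le (SetLike.coe_subset_coe.mpr hBsK)
  have hcentK_Cs : centralizer (K : Set G) ≤ centralizer (Cs : Set G) :=
    centralizer_le (SetLike.coe_subset_coe.mpr hCsK)
  have hBsfac : IsDirectFactor' Bs := by
    refine ⟨?_, ?_, ?_⟩
    · rw [hBs, Subgroup.coe_inf]
      exact (isClosed_centralizer _).inter hK.1
    · rw [eq_bot_iff]
      rintro z ⟨hz1, hz2⟩
      have hzK : z ∈ K ⊓ centralizer (K : Set G) :=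
        ⟨hBsK hz1, hcent_inf ⟨hz2, hBsCent hz1⟩⟩
      rwa [hK.2.1] at hzK
    · rw [eq_top_iff, ← hK.2.2]
      refine sup_le ?_ (hcentK_Bs.trans le_sup_right)
      rw [← hsup']
      exact sup_le le_sup_left (hCsCent.trans le_sup_right)
  have hCsfac : IsDirectFactor' Cs := by
    refine ⟨?_, ?_, ?_⟩
    · rw [hCs, Subgroup.coe_inf]
      exact (isClosed_centralizer _).inter hK.1
    · rw [eq_bot_iff]
      rintro z ⟨hz1, hz2⟩
      have hzK : z ∈ K ⊓ centralizer (K : Set G) :=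
        ⟨hCsK hz1, hcent_inf ⟨hCsCent hz1, hz2⟩⟩
      rwa [hK.2.1] at hzK
    · rw [eq_top_iff, ← hK.2.2]
      refine sup_le ?_ (hcentK_Cs.trans le_sup_right)
      rw [← hsup']
      exact sup_le (hBsCent.trans le_sup_right) le_sup_left
  have hBsne : Bs ≠ ⊥ := fun hb => hBne (le_bot_iff.mp (hb ▸ hBBs))
  have hCsne : Cs ≠ ⊥ := fun hb => hCne (le_bot_iff.mp (hb ▸ hCCs))
  refine ⟨Bs, Cs, hBsfac, hCsfac, hBsne, hCsne, hsup', hCsCent, ?_⟩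
  by_contra hfd
  push_neg at hfd
  apply hKfd
  rw [← hsup']
  exact finDecomp_sup hfd.1 hfd.2 hmeet hCsCent

end Split

section ProdIso
variable {G : Type*} [Group G] [TopologicalSpace G] [IsTopologicalGroup G]
  [CompactSpace G] [T2Space G]

lemma facProj_eq_one_iff {H : Subgroup G} (h : IsDirectFactor' H) {x : G} :
    facProj h x = 1 ↔ x ∈ centralizer (H : Set G) := by
  constructor
  · intro hx
    have happ : fmul H ((facEquiv h).symm x) = x := (facEquiv h).apply_symm_apply x
    have hx2 : (((facEquiv h).symm x).1 : G) * (((facEquiv h).symm x).2 : G) = x := happ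
    have hfst : ((facEquiv h).symm x).1 = 1 := hx
    rw [hfst] at hx2
    simp only [OneMemClass.coe_one, one_mul] at hx2
    rw [← hx2]
    exact (((facEquiv h).symm x).2).2
  · exact facProj_centralizer h

variable {H : ℕ → Subgroup G}

/-- the coordinates map -/
noncomputable def piProj (hfac : ∀ i, IsDirectFactor' (H i)) : G →* ∀ i, H i where
  toFun g := fun i => facProj (hfac i) g
  map_one' := funext fun i => map_one _
  map_mul' x y := funext fun i => map_mul _ _ _

lemma continuous_piProj (hfac : ∀ i, IsDirectFactor' (H i)) : Continuous (piProj hfac) :=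
  continuous_pi fun i => continuous_facProj (hfac i)

/-- density: every point of the product is hit from any closed subgroup containing all `H i` -/
lemma piProj_image_eq_univ (hfac : ∀ i, IsDirectFactor' (H i))
    (hpc : ∀ i j, i ≠ j → H j ≤ centralizer ((H i : Subgroup G) : Set G))
    {M : Subgroup G} (hM : IsClosed (M : Set G))
    (hMH : ∀ i, H i ≤ M) (f : ∀ i, H i) : f ∈ (piProj hfac) '' (M : Set G) := by
  classical
  -- partial products
  let g : ℕ → G := fun n => Nat.rec 1 (fun m gm => gm * ((f m : G))) n
  have hgM : ∀ n, g n ∈ M := by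
    intro n
    induction n with
    | zero => exact one_mem M
    | succ m ih => exact mul_mem ih (hMH m (f m).2)
  have key : ∀ n j, (j < n → facProj (hfac j) (g n) = f j) ∧
      (n ≤ j → facProj (hfac j) (g n) = 1) := by
    intro n
    induction n with
    | zero =>
      intro j
      exact ⟨fun h => absurd h (Nat.not_lt_zero j), fun _ => map_one _⟩
    | succ m ih =>
      intro j
      have hstep : g (m + 1) = g m * (f m : G) := rfl
      constructor
      · intro hj
        rw [hstep, map_mul]
        rcases Nat.lt_succ_iff_lt_or_eq.mp hj with hj' | hj'
        · rw [(ih j).1 hj', facProj_centralizer (hfac j) (hpc j m (Nat.ne_of_lt hj') (f m).2)]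
          rw [mul_one]
        · subst hj'
          rw [(ih j).2 le_rfl, one_mul]
          exact Subtype.ext (facProj_mem (hfac j) (f j).2)
      · intro hj
        rw [hstep, map_mul, (ih j).2 (le_trans (Nat.le_succ m) hj),
          facProj_centralizer (hfac j) (hpc j m (by omega) (f m).2), one_mul]
  have htend : Filter.Tendsto (fun n => piProj hfac (g n)) Filter.atTop (nhds f) := by
    rw [tendsto_pi_nhds]
    intro j
    apply tendsto_atTop_of_eventually_const (i₀ := j + 1)
    intro n hn
    exact (key n j).1 (by omega)
  have hcl : IsClosed ((piProj hfac) '' (M : Set G)) :=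
    ((hM.isCompact.image (continuous_piProj hfac)).isClosed)
  have : f ∈ _root_.closure ((piProj hfac) '' (M : Set G)) := by
    apply mem_closure_of_tendsto htend
    exact Filter.Eventually.of_forall fun n => Set.mem_image_of_mem _ (hgM n)
  rwa [hcl.closure_eq] at this

lemma piProj_mem_ker (hfac : ∀ i, IsDirectFactor' (H i)) {g : G} (hg : piProj hfac g = 1) :
    g ∈ ⨅ i, centralizer ((H i : Subgroup G) : Set G) := by
  rw [Subgroup.mem_iInf]
  intro i
  exact (facProj_eq_one_iff (hfac i)).mp (congrFun hg i)

lemma subgroup_eq_top_of_closed (hfac : ∀ i, IsDirectFactor' (H i))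
    (hpc : ∀ i j, i ≠ j → H j ≤ centralizer ((H i : Subgroup G) : Set G))
    {M : Subgroup G} (hM : IsClosed (M : Set G))
    (hker : (⨅ i, centralizer ((H i : Subgroup G) : Set G)) ≤ M)
    (hMH : ∀ i, H i ≤ M) : M = ⊤ := by
  rw [eq_top_iff]
  intro x _
  obtain ⟨m, hmM, hm⟩ := piProj_image_eq_univ hfac hpc hM hMH (piProj hfac x)
  have h1 : piProj hfac (m⁻¹ * x) = 1 := by
    rw [map_mul, map_inv, hm, inv_mul_cancel]
  have hmem : m⁻¹ * x ∈ M := hker (piProj_mem_ker hfac h1)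
  have h2 := mul_mem hmM hmem
  rwa [← mul_assoc, mul_inv_cancel, one_mul] at h2

lemma piProj_bijective (hfac : ∀ i, IsDirectFactor' (H i))
    (hpc : ∀ i j, i ≠ j → H j ≤ centralizer ((H i : Subgroup G) : Set G))
    (hinf : ⨅ i, centralizer ((H i : Subgroup G) : Set G) = ⊥) :
    Function.Bijective (piProj hfac) := by
  constructor
  · rw [injective_iff_map_eq_one]
    intro a ha
    have := piProj_mem_ker hfac ha
    rw [hinf, Subgroup.mem_bot] at this
    exact this
  · intro f
    obtain ⟨m, _, hm⟩ := piProj_image_eq_univ hfac hpc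
      (by simp : IsClosed ((⊤ : Subgroup G) : Set G)) (fun i => le_top) f
    exact ⟨m, hm⟩

noncomputable def piEquiv (hfac : ∀ i, IsDirectFactor' (H i))
    (hpc : ∀ i j, i ≠ j → H j ≤ centralizer ((H i : Subgroup G) : Set G))
    (hinf : ⨅ i, centralizer ((H i : Subgroup G) : Set G) = ⊥) :
    G ≃* (∀ i, H i) :=
  MulEquiv.ofBijective (piProj hfac) (piProj_bijective hfac hpc hinf)

lemma continuous_piEquiv (hfac : ∀ i, IsDirectFactor' (H i))
    (hpc : ∀ i j, i ≠ j → H j ≤ centralizer ((H i : Subgroup G) : Set G))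
    (hinf : ⨅ i, centralizer ((H i : Subgroup G) : Set G) = ⊥) :
    Continuous (piEquiv hfac hpc hinf) :=
  continuous_piProj hfac

lemma continuous_piEquiv_symm (hfac : ∀ i, IsDirectFactor' (H i))
    (hpc : ∀ i j, i ≠ j → H j ≤ centralizer ((H i : Subgroup G) : Set G))
    (hinf : ⨅ i, centralizer ((H i : Subgroup G) : Set G) = ⊥) :
    Continuous (piEquiv hfac hpc hinf).symm :=
  (Continuous.homeoOfEquivCompactToT2
    (f := (piEquiv hfac hpc hinf).toEquiv) (continuous_piProj hfac)).symm.continuous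

end ProdIso

section Factors
variable {G : Type*} [Group G] [TopologicalSpace G] [IsTopologicalGroup G]
  [CompactSpace G] [T2Space G]

/-- the closed subgroup corresponding to the sub-product over `A` -/
def interFac (H : ℕ → Subgroup G) (A : Set ℕ) : Subgroup G :=
  ⨅ (i : ℕ) (_ : i ∉ A), centralizer ((H i : Subgroup G) : Set G)

lemma le_interFac {H : ℕ → Subgroup G}
    (hpc : ∀ i j, i ≠ j → H j ≤ centralizer ((H i : Subgroup G) : Set G))
    {A : Set ℕ} {i : ℕ} (hi : i ∈ A) : H i ≤ interFac H A :=
  le_iInf fun j => le_iInf fun hj => hpc j i (fun h => hj (by rw [h]; exact hi))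

lemma interFac_le {H : ℕ → Subgroup G} {A : Set ℕ} {i : ℕ} (hi : i ∉ A) :
    interFac H A ≤ centralizer ((H i : Subgroup G) : Set G) := iInf₂_le i hi

lemma isClosed_interFac (H : ℕ → Subgroup G) (A : Set ℕ) :
    IsClosed ((interFac H A : Subgroup G) : Set G) := by
  rw [interFac, coe_iInf]
  refine isClosed_iInter fun i => ?_
  rw [coe_iInf]
  exact isClosed_iInter fun _ => isClosed_centralizer _

lemma interFac_factor {H : ℕ → Subgroup G} (hfac : ∀ i, IsDirectFactor' (H i))
    (hpc : ∀ i j, i ≠ j → H j ≤ centralizer ((H i : Subgroup G) : Set G))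
    (hinf : ⨅ i, centralizer ((H i : Subgroup G) : Set G) = ⊥) (A : Set ℕ) :
    IsDirectFactor' (interFac H A) := by
  refine ⟨isClosed_interFac H A, ?_, ?_⟩
  · rw [eq_bot_iff]
    rintro z ⟨hz1, hz2⟩
    have hz : ∀ i, z ∈ centralizer ((H i : Subgroup G) : Set G) := by
      intro i
      by_cases hi : i ∈ A
      · exact centralizer_le (SetLike.coe_subset_coe.mpr (le_interFac hpc hi)) hz2
      · exact interFac_le hi hz1
    have : z ∈ ⨅ i, centralizer ((H i : Subgroup G) : Set G) := mem_iInf.mpr hz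
    rwa [hinf] at this
  · refine subgroup_eq_top_of_closed hfac hpc ?_ (by rw [hinf]; exact bot_le) ?_
    · rw [coe_sup_of_comm _ _ le_rfl]
      exact (((isClosed_interFac H A).isCompact).mul
        ((isClosed_centralizer _).isCompact)).isClosed
    · intro i
      by_cases hi : i ∈ A
      · exact (le_interFac hpc hi).trans le_sup_left
      · exact (le_centralizer_iff.mpr (interFac_le hi)).trans le_sup_right

lemma relindex_interFac_eq_zero {H : ℕ → Subgroup G} (hfac : ∀ i, IsDirectFactor' (H i))
    (hpc : ∀ i j, i ≠ j → H j ≤ centralizer ((H i : Subgroup G) : Set G))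
    (hne : ∀ i, H i ≠ ⊥) {A A' : Set ℕ}
    (hD : {i | i ∈ A ∧ i ∉ A'}.Infinite) :
    (interFac H A').relIndex (interFac H A) = 0 := by
  classical
  have hw : ∀ i, ∃ x, x ∈ H i ∧ x ≠ 1 := by
    intro i
    by_contra hcon
    push_neg at hcon
    exact hne i ((Subgroup.eq_bot_iff_forall _).mpr fun x hx =>
      not_not.mp fun hx1 => hx1 (hcon x hx))
  choose w hw1 hw2 using hw
  set d := hD.natEmbedding
  have hdA : ∀ k, ((d k : ℕ)) ∈ A := fun k => (d k).2.1
  have hdA' : ∀ k, ((d k : ℕ)) ∉ A' := fun k => (d k).2.2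
  have hdinj : ∀ k l, k ≠ l → ((d k : ℕ)) ≠ ((d l : ℕ)) := by
    intro k l hkl h
    exact hkl (d.injective (Subtype.ext h))
  rw [Subgroup.relIndex, Subgroup.index_eq_card]
  rw [Nat.card_eq_zero]
  right
  refine Infinite.of_injective (fun k : ℕ =>
    (QuotientGroup.mk (⟨w (d k : ℕ), le_interFac hpc (hdA k) (hw1 _)⟩ :
      interFac H A) : interFac H A ⧸ (interFac H A').subgroupOf (interFac H A))) ?_
  intro k l hkl
  by_contra hkl'
  rw [QuotientGroup.eq] at hkl
  rw [Subgroup.mem_subgroupOf] at hkl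
  have hx : ((w (d k : ℕ))⁻¹ * w (d l : ℕ)) ∈ interFac H A' := by
    simpa using hkl
  set π := facProj (hfac (d k : ℕ))
  have h1 : π ((w (d k : ℕ))⁻¹ * w (d l : ℕ)) = 1 := by
    rw [facProj_eq_one_iff]
    exact interFac_le (hdA' k) hx
  have h2 : π (w (d l : ℕ)) = 1 := by
    rw [facProj_eq_one_iff]
    exact hpc (d k : ℕ) (d l : ℕ) (fun hh => hdinj k l hkl' hh) (hw1 _)
  rw [map_mul, map_inv, h2, mul_one, inv_eq_one] at h1
  have h3 : (π (w (d k : ℕ)) : G) = w (d k : ℕ) := facProj_mem _ (hw1 _)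
  rw [h1] at h3
  exact hw2 (d k : ℕ) (by simpa using h3.symm)

end Factors

section Encode

/-- the set of codes of initial segments of a boolean sequence -/
def seqSet (x : ℕ → Bool) : Set ℕ :=
  Set.range fun n => Encodable.encode (List.ofFn fun i : Fin n => x (i : ℕ))

lemma seqSet_diff_infinite {x y : ℕ → Bool} (hxy : x ≠ y) :
    {i | i ∈ seqSet x ∧ i ∉ seqSet y}.Infinite := by
  obtain ⟨n₀, hn₀⟩ := Function.ne_iff.mp hxy
  have hlen : ∀ (z w : ℕ → Bool) (n m : ℕ),
      Encodable.encode (List.ofFn fun i : Fin n => z (i : ℕ)) =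
        Encodable.encode (List.ofFn fun i : Fin m => w (i : ℕ)) → n = m := by
    intro z w n m h
    have h2 := Encodable.encode_injective h
    have h3 := congrArg List.length h2
    simpa using h3
  refine Set.infinite_of_injective_forall_mem
    (f := fun k : ℕ => Encodable.encode (List.ofFn fun i : Fin (n₀ + 1 + k) => x (i : ℕ)))
    ?_ ?_
  · intro k k' h
    have := hlen x x _ _ h
    omega
  · intro k
    refine ⟨⟨n₀ + 1 + k, rfl⟩, ?_⟩
    rintro ⟨m, hm⟩
    have hnm : m = n₀ + 1 + k := hlen y x _ _ hm
    subst hnm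
    have h2 := Encodable.encode_injective hm
    have h3 := List.ofFn_injective h2
    have h4 := congrFun h3 ⟨n₀, by omega⟩
    exact hn₀ (by simpa using h4.symm)

end Encode

/-- A compact group with trivial centre that is not a finite internal direct product of
indecomposable closed (normal) subgroups is topologically isomorphic to an infinite Cartesian
product of non-trivial closed subgroups, and has uncountably many closed direct factors up to
commensurability. -/
theorem stmt_17 {G : Type*} [Group G] [TopologicalSpace G] [IsTopologicalGroup G]
    [CompactSpace G] [T2Space G]
    (hZ : Subgroup.center G = ⊥)
    (hnotfd : ¬ ∃ (n : ℕ) (A : Fin n → Subgroup G),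
      (∀ i, IsClosed ((A i : Subgroup G) : Set G)) ∧ (∀ i, (A i).Normal) ∧
        (∀ i, IsIndecomposable' (A i)) ∧ iSupIndep A ∧ ⨆ i, A i = ⊤) :
    (∃ H : ℕ → Subgroup G, (∀ i, H i ≠ ⊥ ∧ IsClosed ((H i : Subgroup G) : Set G)) ∧
        ∃ e : G ≃* (∀ i, H i), Continuous e ∧ Continuous e.symm) ∧
      (∃ S : Set (Subgroup G), (∀ H ∈ S, IsDirectFactor' H) ∧
        ∀ T : Set (Subgroup G), T.Countable →
          ¬ ∀ H ∈ S, ∃ K ∈ T, Subgroup.Commensurable H K) := by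
  classical
  have hnotfd' : ¬ FinDecomp (⊤ : Subgroup G) := hnotfd
  have htopfac : IsDirectFactor' (⊤ : Subgroup G) := by
    have hcent : centralizer (((⊤ : Subgroup G)) : Set G) = center G := by
      rw [Subgroup.coe_top, centralizer_univ]
    refine ⟨by rw [Subgroup.coe_top]; exact isClosed_univ, ?_, ?_⟩
    · rw [hcent, hZ, top_inf_eq]
    · rw [top_sup_eq]
  have hstep : ∀ K : Subgroup G, IsDirectFactor' K → ¬ FinDecomp K →
      ∃ p : Subgroup G × Subgroup G,
        IsDirectFactor' p.1 ∧ p.1 ≠ ⊥ ∧ IsDirectFactor' p.2 ∧ ¬ FinDecomp p.2 ∧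
          p.2 ≤ centralizer ((p.1 : Subgroup G) : Set G) ∧ p.1 ≤ K ∧ p.2 ≤ K := by
    intro K hK hKfd
    obtain ⟨B, C, hB, hC, hBne, hCne, hsup, hcomm, hor⟩ := exists_split hZ hK hKfd
    rcases hor with h | h
    · exact ⟨(C, B), hC, hCne, hB, h, le_centralizer_iff.mpr hcomm,
        hsup ▸ le_sup_right, hsup ▸ le_sup_left⟩
    · exact ⟨(B, C), hB, hBne, hC, h, hcomm, hsup ▸ le_sup_left, hsup ▸ le_sup_right⟩
  choose! f hf1 hf2 hf3 hf4 hf5 hf6 hf7 using hstep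
  set K : ℕ → Subgroup G := fun n => Nat.rec ⊤ (fun _ Kn => (f Kn).2) n with hK
  set B : ℕ → Subgroup G := fun n => (f (K n)).1 with hB
  have hKinv : ∀ n, IsDirectFactor' (K n) ∧ ¬ FinDecomp (K n) := by
    intro n
    induction n with
    | zero => exact ⟨htopfac, hnotfd'⟩
    | succ m ih => exact ⟨hf3 _ ih.1 ih.2, hf4 _ ih.1 ih.2⟩
  have hBfac : ∀ n, IsDirectFactor' (B n) := fun n => hf1 _ (hKinv n).1 (hKinv n).2
  have hBne : ∀ n, B n ≠ ⊥ := fun n => hf2 _ (hKinv n).1 (hKinv n).2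
  have hKcent : ∀ n, K (n + 1) ≤ centralizer ((B n : Subgroup G) : Set G) :=
    fun n => hf5 _ (hKinv n).1 (hKinv n).2
  have hBK : ∀ n, B n ≤ K n := fun n => hf6 _ (hKinv n).1 (hKinv n).2
  have hKK : ∀ n, K (n + 1) ≤ K n := fun n => hf7 _ (hKinv n).1 (hKinv n).2
  have hKmono : ∀ m n, m ≤ n → K n ≤ K m := by
    intro m n h
    induction h with
    | refl => exact le_rfl
    | @step p hp ih => exact (hKK p).trans ih
  have hBc : ∀ m n : ℕ, m ≠ n → B n ≤ centralizer ((B m : Subgroup G) : Set G) := by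
    intro m n hmn
    rcases Nat.lt_or_ge m n with h | h
    · exact (hBK n).trans ((hKmono (m + 1) n h).trans (hKcent m))
    · have h' : n < m := by omega
      exact le_centralizer_iff.mpr
        ((hBK m).trans ((hKmono (n + 1) m h').trans (hKcent n)))
  set N : Subgroup G := ⨅ i, centralizer ((B (i + 1) : Subgroup G) : Set G) with hN
  have hNclosed : IsClosed (N : Set G) := by
    have hcoe : (N : Set G) = ⋂ i, ((centralizer ((B (i + 1)) : Set G) : Subgroup G) : Set G) :=
      coe_iInf
    rw [hcoe]
    exact isClosed_iInter fun i => isClosed_centralizer _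
  have hB0N : B 0 ≤ N := le_iInf fun i => hBc (i + 1) 0 (by omega)
  have hNne : N ≠ ⊥ := fun h => hBne 0 (le_bot_iff.mp (h ▸ hB0N))
  have hfac1 : ∀ i : ℕ, IsDirectFactor' ((fun i => B (i + 1)) i) := fun i => hBfac (i + 1)
  have hpc1 : ∀ i j : ℕ, i ≠ j →
      (fun i => B (i + 1)) j ≤ centralizer (((fun i => B (i + 1)) i : Subgroup G) : Set G) :=
    fun i j hij => hBc (i + 1) (j + 1) (by omega)
  have hNle : ∀ i, N ≤ centralizer ((B (i + 1) : Subgroup G) : Set G) := fun i => iInf_le _ i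
  have hNmeet : N ⊓ centralizer (N : Set G) = ⊥ := by
    rw [eq_bot_iff]
    rintro z ⟨hz1, hz2⟩
    have hM : centralizer ({z} : Set G) = ⊤ := by
      refine subgroup_eq_top_of_closed hfac1 hpc1 (isClosed_centralizer _) ?_ ?_
      · intro x hx
        rw [mem_centralizer_singleton_iff]
        exact mem_centralizer_iff.mp hz2 x hx
      · intro i x hx
        rw [mem_centralizer_singleton_iff]
        exact mem_centralizer_iff.mp (hNle i hz1) x hx
    have hz' : z ∈ center G := by
      rw [Subgroup.mem_center_iff]
      intro g
      have hg : g ∈ centralizer ({z} : Set G) := by rw [hM]; trivial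
      exact mem_centralizer_singleton_iff.mp hg
    rw [hZ] at hz'
    exact hz'
  have hNjoin : N ⊔ centralizer (N : Set G) = ⊤ := by
    refine subgroup_eq_top_of_closed hfac1 hpc1 ?_ le_sup_left ?_
    · rw [coe_sup_of_comm _ _ le_rfl]
      exact ((hNclosed.isCompact).mul ((isClosed_centralizer _).isCompact)).isClosed
    · intro i
      exact (le_centralizer_iff.mpr (hNle i)).trans le_sup_right
  have hNfac : IsDirectFactor' N := ⟨hNclosed, hNmeet, hNjoin⟩
  set Hf : ℕ → Subgroup G := fun n => Nat.casesOn n N (fun m => B (m + 1)) with hHf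
  have hHf0 : Hf 0 = N := congrFun hHf 0
  have hHfs : ∀ m, Hf (m + 1) = B (m + 1) := fun m => congrFun hHf (m + 1)
  have hHfac : ∀ i, IsDirectFactor' (Hf i) := by
    intro i; cases i with
    | zero => rw [hHf0]; exact hNfac
    | succ m => rw [hHfs]; exact hBfac (m + 1)
  have hHne : ∀ i, Hf i ≠ ⊥ := by
    intro i; cases i with
    | zero => rw [hHf0]; exact hNne
    | succ m => rw [hHfs]; exact hBne (m + 1)
  have hHpc : ∀ i j, i ≠ j → Hf j ≤ centralizer ((Hf i : Subgroup G) : Set G) := by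
    intro i j hij
    cases i with
    | zero =>
      cases j with
      | zero => exact absurd rfl hij
      | succ m => rw [hHf0, hHfs]; exact le_centralizer_iff.mpr (hNle m)
    | succ m =>
      cases j with
      | zero => rw [hHf0, hHfs]; exact hNle m
      | succ p => rw [hHfs, hHfs]; exact hBc (m + 1) (p + 1) (by omega)
  have hHinf : ⨅ i, centralizer ((Hf i : Subgroup G) : Set G) = ⊥ := by
    rw [eq_bot_iff]
    intro z hz
    rw [mem_iInf] at hz
    have hzN : z ∈ N := mem_iInf.mpr fun i => by
      have := hz (i + 1); rwa [hHfs] at this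
    have hzC : z ∈ centralizer (N : Set G) := by
      have := hz 0; rwa [hHf0] at this
    have hmem : z ∈ N ⊓ centralizer (N : Set G) := ⟨hzN, hzC⟩
    rwa [hNmeet] at hmem
  constructor
  · exact ⟨Hf, fun i => ⟨hHne i, (hHfac i).1⟩,
      piEquiv hHfac hHpc hHinf, continuous_piEquiv hHfac hHpc hHinf,
      continuous_piEquiv_symm hHfac hHpc hHinf⟩
  · refine ⟨Set.range (fun x : ℕ → Bool => interFac Hf (seqSet x)), ?_, ?_⟩
    · rintro Hh ⟨x, rfl⟩
      exact interFac_factor hHfac hHpc hHinf _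
    · intro T hT hcov
      have hpick : ∀ x : ℕ → Bool, ∃ Kk, Kk ∈ T ∧
          Commensurable (interFac Hf (seqSet x)) Kk := by
        intro x
        obtain ⟨Kk, hKk, hc⟩ := hcov _ ⟨x, rfl⟩
        exact ⟨Kk, hKk, hc⟩
      choose c hcT hcC using hpick
      have hcinj : Function.Injective c := by
        intro x y hxy
        by_contra hxyne
        have hcm : Commensurable (interFac Hf (seqSet x)) (interFac Hf (seqSet y)) :=
          Commensurable.trans (hxy ▸ hcC x) (hcC y).symm
        have h0 : (interFac Hf (seqSet y)).relIndex (interFac Hf (seqSet x)) = 0 :=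
          relindex_interFac_eq_zero hHfac hHpc hHne (seqSet_diff_infinite hxyne)
        exact hcm.2 h0
      haveI : Countable T := hT.to_subtype
      haveI hcount : Countable (ℕ → Bool) := by
        have hinj : Function.Injective (fun x : ℕ → Bool => (⟨c x, hcT x⟩ : T)) := by
          intro x y h
          exact hcinj (congrArg Subtype.val h)
        exact hinj.countable
      obtain ⟨g, hg⟩ := exists_surjective_nat (ℕ → Bool)
      obtain ⟨n, hn⟩ := hg fun n => !(g n n)
      have hcontra := congrFun hn n
      simp at hcontra
end

section
/- Let G be a totally disconnected locally compact group with QZ(G) = 1 and let H, K be subgroups of G such that H ∩ K is finite, N_H(K) has finite index in H, N_K(H) has finite index in K, and QZ(H) = 1. Then H centralises an open subgroup of K. -/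
open scoped Pointwise

/-- In any topological group, a compact open set `W` admits `T ∈ 𝓝 1` with `W * T ⊆ W`.
(Adaptation of `TopologicalGroup.exist_mul_closure_nhd` to the locally compact setting.) -/
private lemma aux_exist_mul_closure_nhd {G : Type*} [Group G] [TopologicalSpace G]
    [IsTopologicalGroup G] {W : Set G} (Wcomp : IsCompact W) (Wopen : IsOpen W) :
    ∃ T ∈ nhds (1 : G), W * T ⊆ W := by
  apply Wcomp.induction_on (p := fun S ↦ ∃ T ∈ nhds (1 : G), S * T ⊆ W)
    ⟨Set.univ, by simp only [Filter.univ_mem, Set.empty_mul, Set.empty_subset, and_self]⟩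
    (fun _ _ huv ⟨T, hT, mem⟩ ↦ ⟨T, hT, (Set.mul_subset_mul_right huv).trans mem⟩)
    (fun U V ⟨T₁, hT₁, mem1⟩ ⟨T₂, hT₂, mem2⟩ ↦ ⟨T₁ ∩ T₂, Filter.inter_mem hT₁ hT₂, by
      rw [Set.union_mul]
      exact Set.union_subset ((Set.mul_subset_mul_left Set.inter_subset_left).trans mem1)
        ((Set.mul_subset_mul_left Set.inter_subset_right).trans mem2)⟩)
  intro x memW
  have : (x, 1) ∈ (fun p : G × G ↦ p.1 * p.2) ⁻¹' W := by simp [memW]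
  rcases isOpen_prod_iff.mp (continuous_mul.isOpen_preimage W Wopen) x 1 this with
    ⟨U, V, Uopen, Vopen, xmemU, onememV, prodsub⟩
  have h6 : U * V ⊆ W := Set.mul_subset_iff.mpr fun _ hx _ hy ↦ prodsub (Set.mk_mem_prod hx hy)
  exact ⟨U ∩ W, ⟨U, Uopen.mem_nhds xmemU, W, fun _ a ↦ a, rfl⟩,
    V, Vopen.mem_nhds onememV, fun _ a ↦ h6 ((Set.mul_subset_mul_right Set.inter_subset_left) a)⟩

/-- In any topological group, a compact open neighbourhood of `1` contains an open subgroup.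
(Adaptation of `TopologicalGroup.exist_openSubgroup_sub_clopen_nhd_of_one`.) -/
private lemma aux_exist_openSubgroup {G : Type*} [Group G] [TopologicalSpace G]
    [IsTopologicalGroup G] {W : Set G} (Wcomp : IsCompact W) (Wopen : IsOpen W) (einW : 1 ∈ W) :
    ∃ S : Subgroup G, IsOpen (S : Set G) ∧ (S : Set G) ⊆ W := by
  obtain ⟨S0, Smemnhds, mulclose⟩ := aux_exist_mul_closure_nhd Wcomp Wopen
  rcases mem_nhds_iff.mp Smemnhds with ⟨U, UsubS, Uopen, onememU⟩
  set V : Set G := U ∩ U⁻¹ with hVdef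
  have Vopen : IsOpen V := Uopen.inter Uopen.inv
  have memV1 : (1 : G) ∈ V := ⟨onememU, by simpa using onememU⟩
  have hVinv : V⁻¹ = V := by simp [hVdef, Set.inter_comm]
  have WmulV : W * V ⊆ W :=
    (Set.mul_subset_mul_left (fun x hx => UsubS hx.1)).trans mulclose
  let S : Subgroup G :=
    { carrier := ⋃ n, V ^ (n + 1)
      mul_mem' := fun ha hb ↦ by
        rcases Set.mem_iUnion.mp ha with ⟨k, hk⟩
        rcases Set.mem_iUnion.mp hb with ⟨l, hl⟩
        apply Set.mem_iUnion.mpr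
        exact ⟨k + 1 + l, by rw [add_assoc, pow_add]; exact Set.mul_mem_mul hk hl⟩
      one_mem' := Set.mem_iUnion.mpr ⟨0, by simpa using memV1⟩
      inv_mem' := fun ha ↦ by
        rcases Set.mem_iUnion.mp ha with ⟨k, hk⟩
        apply Set.mem_iUnion.mpr
        exact ⟨k, by rw [← hVinv]; simpa only [inv_pow, Set.mem_inv, inv_inv] using hk⟩ }
  have mulVpow : ∀ n : ℕ, W * V ^ (n + 1) ⊆ W := by
    intro n
    induction' n with n ih
    · simpa using WmulV
    · rw [pow_succ, ← mul_assoc]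
      exact (Set.mul_subset_mul_right ih).trans WmulV
  refine ⟨S, isOpen_iUnion fun n => by rw [pow_succ]; exact Vopen.mul_left, ?_⟩
  refine Set.iUnion_subset fun n x hx => mulVpow n ?_
  exact ⟨1, einW, x, hx, one_mul x⟩

/-- If `G` is a t.d.l.c. group with trivial quasi-centre, and `H`, `K` are subgroups such that
`H ∩ K` is finite, `N_H(K)` has finite index in `H`, `N_K(H)` has finite index in `K`, and the
quasi-centre of `H` is trivial, then `H` centralises an open subgroup of `K`. -/
theorem stmt_19 {G : Type*} [Group G] [TopologicalSpace G] [IsTopologicalGroup G]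
    [LocallyCompactSpace G] [TotallyDisconnectedSpace G]
    (hQZ : ∀ g : G,
      IsOpen ((Subgroup.centralizer ({g} : Set G) : Subgroup G) : Set G) → g = 1)
    (H K : Subgroup G)
    (hHK : ((H ⊓ K : Subgroup G) : Set G).Finite)
    (hNH : (Subgroup.normalizer (K : Set G)).relIndex H ≠ 0)
    (hNK : (Subgroup.normalizer (H : Set G)).relIndex K ≠ 0)
    (hQZH : ∀ h : H,
      IsOpen ((Subgroup.centralizer ({h} : Set H) : Subgroup H) : Set H) → h = 1) :
    ∃ U : Subgroup G, IsOpen (U : Set G) ∧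
      H ≤ Subgroup.centralizer ((K ⊓ U : Subgroup G) : Set G) := by
  classical
  haveI : T2Space G := IsTopologicalGroup.t2Space_iff_one_closed.mpr isClosed_singleton
  -- Key: any element of `H` whose centraliser has finite index in `H` is trivial
  -- (closed + finite index ⇒ open, then apply triviality of `QZ(H)`).
  have key : ∀ m : G, ∀ hmH : m ∈ H,
      (Subgroup.centralizer ({m} : Set G)).relIndex H ≠ 0 → m = 1 := by
    intro m hmH hrel
    set D : Subgroup H := Subgroup.centralizer ({(⟨m, hmH⟩ : H)} : Set H) with hD
    have hDeq : D = (Subgroup.centralizer ({m} : Set G)).subgroupOf H := by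
      ext x
      simp only [hD, Subgroup.mem_subgroupOf, Subgroup.mem_centralizer_iff, Subtype.ext_iff,
        Set.mem_singleton_iff, forall_eq, Subgroup.coe_mul, Subtype.forall]
      constructor
      · intro hx; exact hx m hmH rfl
      · intro hx a haH ham; subst ham; exact hx
    haveI hDfi : D.FiniteIndex := ⟨by rw [hDeq]; exact hrel⟩
    have hDclosed : IsClosed (D : Set H) := by
      have : (D : Set H) = {x : H | (⟨m, hmH⟩ : H) * x = x * ⟨m, hmH⟩} := by
        ext x
        simp [hD, Subgroup.mem_centralizer_iff]
      rw [this]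
      exact isClosed_eq (continuous_const.mul continuous_id) (continuous_id.mul continuous_const)
    have hDopen := Subgroup.isOpen_of_isClosed_of_finiteIndex D hDclosed
    have h1 := hQZH ⟨m, hmH⟩ hDopen
    simpa using congrArg Subtype.val h1
  -- finite-index estimate: any `m ∈ H ∩ K ∩ N(H)` has centraliser of finite index in `H`.
  have fin : ∀ m : G, m ∈ H → m ∈ K → m ∈ (Subgroup.normalizer (H : Set G)) →
      (Subgroup.centralizer ({m} : Set G)).relIndex H ≠ 0 := by
    intro m hmH hmK hmNH
    set C : Subgroup G := Subgroup.centralizer ({m} : Set G) with hC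
    set H0 : Subgroup H := (Subgroup.normalizer (K : Set G)).subgroupOf H with hH0
    have hH0ind : H0.index ≠ 0 := hNH
    set D : Subgroup H := C.subgroupOf H with hD
    set E : Subgroup H0 := (D ⊓ H0).subgroupOf H0 with hE
    have hcoeK : ∀ x : H0, ((x : H) : G) ∈ (Subgroup.normalizer (K : Set G)) := fun x =>
      Subgroup.mem_subgroupOf.mp x.2
    have hfmem : ∀ x : H0, ((x : H) : G) * m * ((x : H) : G)⁻¹ * m⁻¹ ∈ H ⊓ K := by
      intro x
      refine Subgroup.mem_inf.mpr ⟨?_, ?_⟩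
      · have h1 : ((x : H) : G) ∈ H := (x : H).2
        have h2 : m * ((x : H) : G)⁻¹ * m⁻¹ ∈ H :=
          (Subgroup.mem_normalizer_iff.mp hmNH _).mp (inv_mem h1)
        have e : ((x : H) : G) * m * ((x : H) : G)⁻¹ * m⁻¹
            = ((x : H) : G) * (m * ((x : H) : G)⁻¹ * m⁻¹) := by group
        rw [e]; exact mul_mem h1 h2
      · have h3 : ((x : H) : G) * m * ((x : H) : G)⁻¹ ∈ K :=
          (Subgroup.mem_normalizer_iff.mp (hcoeK x) _).mp hmK
        exact mul_mem h3 (inv_mem hmK)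
    have hiff : ∀ a b : H0, ((((a : H) : G) * m * ((a : H) : G)⁻¹ * m⁻¹ : G)
        = (((b : H) : G) * m * ((b : H) : G)⁻¹ * m⁻¹ : G)) ↔ a⁻¹ * b ∈ E := by
      intro a b
      have hco : (((a⁻¹ * b : H0) : H) : G) = ((a : H) : G)⁻¹ * ((b : H) : G) := by
        push_cast; rfl
      have hmemiff : a⁻¹ * b ∈ E ↔
          m * (((a : H) : G)⁻¹ * ((b : H) : G))
            = (((a : H) : G)⁻¹ * ((b : H) : G)) * m := by
        rw [hE, Subgroup.mem_subgroupOf, Subgroup.mem_inf]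
        constructor
        · intro hx
          have := Subgroup.mem_subgroupOf.mp hx.1
          rw [hC] at this
          have := Subgroup.mem_centralizer_iff.mp this m rfl
          rwa [hco] at this
        · intro hx
          refine ⟨Subgroup.mem_subgroupOf.mpr ?_, SetLike.coe_mem _⟩
          rw [hC]
          apply Subgroup.mem_centralizer_iff.mpr
          intro s hs
          rw [Set.mem_singleton_iff] at hs; subst hs
          rwa [hco]
      rw [hmemiff]
      set A : G := ((a : H) : G)
      set B : G := ((b : H) : G)
      constructor
      · intro h0
        have h1 : A * m * A⁻¹ = B * m * B⁻¹ := (mul_left_inj m⁻¹).mp h0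
        calc m * (A⁻¹ * B) = A⁻¹ * (A * m * A⁻¹) * B := by group
          _ = A⁻¹ * (B * m * B⁻¹) * B := by rw [h1]
          _ = (A⁻¹ * B) * m := by group
      · intro h2
        calc A * m * A⁻¹ * m⁻¹ = A * (m * (A⁻¹ * B)) * B⁻¹ * m⁻¹ := by group
          _ = A * ((A⁻¹ * B) * m) * B⁻¹ * m⁻¹ := by rw [h2]
          _ = B * m * B⁻¹ * m⁻¹ := by group
    have hfin : Finite (H0 ⧸ E) := by
      haveI := hHK.to_subtype
      let f : H0 → ((H ⊓ K : Subgroup G) : Set G) :=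
        fun x => ⟨((x : H) : G) * m * ((x : H) : G)⁻¹ * m⁻¹, hfmem x⟩
      let F : H0 ⧸ E → ((H ⊓ K : Subgroup G) : Set G) :=
        Quotient.lift f (fun a b hab => Subtype.ext
          ((hiff a b).mpr (QuotientGroup.leftRel_apply.mp hab)))
      have hFinj : Function.Injective F := by
        intro q1 q2
        refine Quotient.inductionOn₂ q1 q2 ?_
        intro a b h
        exact Quotient.sound (QuotientGroup.leftRel_apply.mpr
          ((hiff a b).mp (Subtype.ext_iff.mp h)))
      exact Finite.of_injective F hFinj
    have hEind : E.index ≠ 0 := @Subgroup.index_ne_zero_of_finite _ _ _ hfin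
    have h1 : (D ⊓ H0).index ≠ 0 := by
      have h2 := Subgroup.relIndex_mul_index (inf_le_right : D ⊓ H0 ≤ H0)
      rw [← h2]
      exact Nat.mul_ne_zero hEind hH0ind
    have hdvd := Subgroup.index_dvd_of_le (inf_le_left : D ⊓ H0 ≤ D)
    intro h0
    exact h1 (Nat.eq_zero_of_zero_dvd (h0 ▸ hdvd))
  -- Step 1: `H ∩ K ∩ N(H) = 1`.
  have triv : ∀ m : G, m ∈ H → m ∈ K → m ∈ (Subgroup.normalizer (H : Set G)) → m = 1 :=
    fun m h1 h2 h3 => key m h1 (fin m h1 h2 h3)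
  -- Step 2: `N_H(K)` and `N_K(H)` commute elementwise.
  have comm0 : ∀ h : G, h ∈ H → h ∈ (Subgroup.normalizer (K : Set G)) →
      ∀ k : G, k ∈ K → k ∈ (Subgroup.normalizer (H : Set G)) → h * k = k * h := by
    intro h hh hhn k hk hkn
    have hcH : h * k * h⁻¹ * k⁻¹ ∈ H := by
      have e : h * k * h⁻¹ * k⁻¹ = h * (k * h⁻¹ * k⁻¹) := by group
      rw [e]
      exact mul_mem hh ((Subgroup.mem_normalizer_iff.mp hkn _).mp (inv_mem hh))
    have hcK : h * k * h⁻¹ * k⁻¹ ∈ K :=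
      mul_mem ((Subgroup.mem_normalizer_iff.mp hhn _).mp hk) (inv_mem hk)
    have hcN : h * k * h⁻¹ * k⁻¹ ∈ (Subgroup.normalizer (H : Set G)) :=
      mul_mem (mul_mem (mul_mem (Subgroup.le_normalizer hh) hkn)
        (inv_mem (Subgroup.le_normalizer hh))) (inv_mem hkn)
    have h1 := triv _ hcH hcK hcN
    calc h * k = (h * k * h⁻¹ * k⁻¹) * (k * h) := by group
      _ = k * h := by rw [h1, one_mul]
  -- Step 3: the normal core `A` of `N_H(K)` in `H`, and `N := C_G(A)`.
  haveI hH0fi : ((Subgroup.normalizer (K : Set G)).subgroupOf H).FiniteIndex := ⟨hNH⟩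
  set A : Subgroup H := ((Subgroup.normalizer (K : Set G)).subgroupOf H).normalCore with hA
  haveI hAfi : A.FiniteIndex := Subgroup.finiteIndex_normalCore _
  set N : Subgroup G := Subgroup.centralizer ((A.map H.subtype : Subgroup G) : Set G) with hN
  have hK0N : ∀ k : G, k ∈ K → k ∈ (Subgroup.normalizer (H : Set G)) → k ∈ N := by
    intro k hk hkn
    apply Subgroup.mem_centralizer_iff.mpr
    intro s hs
    obtain ⟨a, haA, rfl⟩ := Subgroup.mem_map.mp hs
    have haH : (H.subtype a : G) ∈ H := a.2
    have haNK : (H.subtype a : G) ∈ (Subgroup.normalizer (K : Set G)) :=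
      Subgroup.mem_subgroupOf.mp (Subgroup.normalCore_le _ haA)
    exact comm0 _ haH haNK k hk hkn
  have hconjN : ∀ h : G, h ∈ H → ∀ n : G, n ∈ N → h * n * h⁻¹ ∈ N := by
    intro h hh n hn
    apply Subgroup.mem_centralizer_iff.mpr
    intro s hs
    obtain ⟨a, haA, rfl⟩ := Subgroup.mem_map.mp hs
    have h1 : (⟨h, hh⟩ : H)⁻¹ * a * ⟨h, hh⟩ ∈ A := by
      have := (Subgroup.normalCore_normal _).conj_mem a haA (⟨h, hh⟩ : H)⁻¹
      simpa using this
    have h2 : h⁻¹ * (H.subtype a : G) * h ∈ (A.map H.subtype) :=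
      ⟨_, h1, by simp⟩
    have h3 := Subgroup.mem_centralizer_iff.mp hn _ h2
    calc (H.subtype a : G) * (h * n * h⁻¹)
        = h * ((h⁻¹ * (H.subtype a : G) * h) * n) * h⁻¹ := by group
      _ = h * (n * (h⁻¹ * (H.subtype a : G) * h)) * h⁻¹ := by rw [h3]
      _ = (h * n * h⁻¹) * (H.subtype a : G) := by group
  have hHNtriv : ∀ x : G, x ∈ H → x ∈ N → x = 1 := by
    intro x hx hxN
    apply key x hx
    have hle : A ≤ (Subgroup.centralizer ({x} : Set G)).subgroupOf H := by
      intro a haA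
      apply Subgroup.mem_subgroupOf.mpr
      apply Subgroup.mem_centralizer_iff.mpr
      intro s hs
      rw [Set.mem_singleton_iff] at hs; subst hs
      exact (Subgroup.mem_centralizer_iff.mp hxN (H.subtype a) ⟨a, haA, rfl⟩).symm
    have hdvd := Subgroup.index_dvd_of_le hle
    intro h0
    exact hAfi.index_ne_zero (Nat.eq_zero_of_zero_dvd (h0 ▸ hdvd))
  -- Step 4: all of `H` commutes with `N_K(H)`.
  have hK0C : ∀ k : G, k ∈ K → k ∈ (Subgroup.normalizer (H : Set G)) → ∀ h : G, h ∈ H → h * k = k * h := by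
    intro k hk hkn h hh
    have hcH : h * k * h⁻¹ * k⁻¹ ∈ H := by
      have e : h * k * h⁻¹ * k⁻¹ = h * (k * h⁻¹ * k⁻¹) := by group
      rw [e]
      exact mul_mem hh ((Subgroup.mem_normalizer_iff.mp hkn _).mp (inv_mem hh))
    have hkN : k ∈ N := hK0N k hk hkn
    have hcN : h * k * h⁻¹ * k⁻¹ ∈ N := mul_mem (hconjN h hh k hkN) (inv_mem hkN)
    have h1 := hHNtriv _ hcH hcN
    calc h * k = (h * k * h⁻¹ * k⁻¹) * (k * h) := by group
      _ = k * h := by rw [h1, one_mul]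
  -- Step 5: `C_K(H)` is a closed finite-index, hence open, subgroup of `K`.
  set CK : Subgroup K := (Subgroup.centralizer (H : Set G)).subgroupOf K with hCK
  have hle2 : (Subgroup.normalizer (H : Set G)).subgroupOf K ≤ CK := by
    intro x hx
    apply Subgroup.mem_subgroupOf.mpr
    apply Subgroup.mem_centralizer_iff.mpr
    intro h hh
    exact hK0C (x : G) x.2 (Subgroup.mem_subgroupOf.mp hx) h hh
  haveI hCKfi : CK.FiniteIndex :=
    ⟨fun h0 => hNK (Nat.eq_zero_of_zero_dvd (h0 ▸ Subgroup.index_dvd_of_le hle2))⟩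
  have hCKclosed : IsClosed (CK : Set K) := by
    have e : (CK : Set K) = ⋂ (h : H), {x : K | (h : G) * (x : G) = (x : G) * (h : G)} := by
      ext x
      simp only [SetLike.mem_coe, hCK, Subgroup.mem_subgroupOf, Subgroup.mem_centralizer_iff,
        Set.mem_iInter, Set.mem_setOf_eq]
      constructor
      · intro hx h; exact hx (h : G) h.2
      · intro hx g hg; exact hx ⟨g, hg⟩
    rw [e]
    exact isClosed_iInter fun h => isClosed_eq (continuous_const.mul continuous_subtype_val)
      (continuous_subtype_val.mul continuous_const)
  have hCKopen := Subgroup.isOpen_of_isClosed_of_finiteIndex CK hCKclosed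
  obtain ⟨V, Vopen, hVpre⟩ := isOpen_induced_iff.mp hCKopen
  have h1V : (1 : G) ∈ V := by
    have h1 : (1 : K) ∈ Subtype.val ⁻¹' V := by
      rw [hVpre]; exact CK.one_mem
    simpa using h1
  -- extract a compact open subgroup inside `V` (van Dantzig)
  obtain ⟨s, scomp, hs1, hsV⟩ := exists_compact_subset Vopen h1V
  obtain ⟨W, hWclopen, h1W, hWsub⟩ :=
    loc_compact_Haus_tot_disc_of_zero_dim.mem_nhds_iff.mp (isOpen_interior.mem_nhds hs1)
  have Wcomp : IsCompact W :=
    scomp.of_isClosed_subset hWclopen.1 (hWsub.trans interior_subset)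
  obtain ⟨S, Sopen, hSW⟩ := aux_exist_openSubgroup Wcomp hWclopen.2 h1W
  refine ⟨S, Sopen, ?_⟩
  intro h hh
  apply Subgroup.mem_centralizer_iff.mpr
  intro x hx
  have hx' : x ∈ K ⊓ S := hx
  obtain ⟨hxK, hxS⟩ := Subgroup.mem_inf.mp hx'
  have hxV : x ∈ V := hsV (interior_subset (hWsub (hSW hxS)))
  have hxCK : (⟨x, hxK⟩ : K) ∈ CK := by
    have : (⟨x, hxK⟩ : K) ∈ Subtype.val ⁻¹' V := hxV
    rwa [hVpre] at this
  have hxc : x ∈ Subgroup.centralizer (H : Set G) := Subgroup.mem_subgroupOf.mp hxCK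
  exact (Subgroup.mem_centralizer_iff.mp hxc h hh).symm
end
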